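/- arXiv:2512.06672 — 9 statements merged into one kernel-verified Lean document; each statement's English description precedes it below -/
import Mathlib

section
/- Let n ≥ 2 and ζ = exp(2πi/n). Then the sum over k = 1 to n-1 of 1/(1 - ζ^k)^2 equals -(n-1)(n-5)/12. -/
open Complex Finset Polynomial

private lemma deriv_prod' {ι : Type*} [DecidableEq ι] (s : Finset ι) (f : ι → Polynomial ℂ) :
    derivative (∏ i ∈ s, f i) = ∑ i ∈ s, (∏ j ∈ s.erase i, f j) * derivative (f i) := by
  induction s using Finset.induction_on with
  | empty => simp
  | insert a s ha ih =>
    have h2 : ∀ i ∈ s, (∏ j ∈ (insert a s).erase i, f j) * derivative (f i)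
        = f a * ((∏ j ∈ s.erase i, f j) * derivative (f i)) := fun i hi => by
      rw [Finset.erase_insert_of_ne (by rintro rfl; exact ha hi),
        Finset.prod_insert (fun h => ha (Finset.mem_of_mem_erase h))]
      ring
    rw [Finset.prod_insert ha, derivative_mul, ih, Finset.sum_insert ha,
      Finset.erase_insert ha, Finset.sum_congr rfl h2, ← Finset.mul_sum]
    ring

private lemma sumA (n : ℕ) : ∑ j ∈ range n, (j:ℂ) = n*(n-1)/2 := by
  induction n with
  | zero => simp
  | succ m ih => rw [Finset.sum_range_succ, ih]; push_cast; ring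

private lemma sumB (n : ℕ) : ∑ j ∈ range n, (j:ℂ) * ((j-1 : ℕ):ℂ) = n*(n-1)*(n-2)/3 := by
  induction n with
  | zero => simp
  | succ m ih =>
    rcases Nat.eq_zero_or_pos m with rfl | hm
    · norm_num
    rw [Finset.sum_range_succ, ih, Nat.cast_sub hm]
    push_cast; ring

theorem sum_inv_sq_one_sub_root_of_unity (n : ℕ) (hn : 2 ≤ n)
    (ζ : ℂ) (hζ : ζ = Complex.exp (2 * Real.pi * Complex.I / n)) :
    ∑ k ∈ Finset.Icc 1 (n - 1), 1 / (1 - ζ ^ k) ^ 2 =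
      -(((n : ℂ) - 1) * ((n : ℂ) - 5)) / 12 := by
  classical
  have hn0 : n ≠ 0 := by omega
  have hprim : IsPrimitiveRoot ζ n := hζ ▸ Complex.isPrimitiveRoot_exp n hn0
  have hn' : (n:ℂ) ≠ 0 := Nat.cast_ne_zero.2 hn0
  set s : Finset ℕ := Finset.Ioo 0 n with hsdef
  have hIcc : Finset.Icc 1 (n-1) = s := by
    ext a; simp only [hsdef, Finset.mem_Icc, Finset.mem_Ioo]; omega
  have hrange : Finset.range n = insert 0 s := by
    ext a; simp only [hsdef, Finset.mem_range, Finset.mem_insert, Finset.mem_Ioo]; omega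
  have h0s : (0:ℕ) ∉ s := by simp [hsdef]
  -- the polynomial identity
  have hQ : ∏ k ∈ s, (X - C (ζ^k)) = ∑ j ∈ Finset.range n, (X:Polynomial ℂ)^j := by
    have h1 : ((X:Polynomial ℂ) - 1) ≠ 0 := by
      simpa using Polynomial.X_sub_C_ne_zero (1:ℂ)
    apply mul_left_cancel₀ h1
    have hfac : (X:Polynomial ℂ)^n - 1 = ∏ i ∈ Finset.range n, (X - C (ζ^i)) := by
      simpa using X_pow_sub_C_eq_prod hprim (by omega : 0 < n) (one_pow n)
    calc ((X:Polynomial ℂ) - 1) * ∏ k ∈ s, (X - C (ζ^k))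
        = ∏ i ∈ Finset.range n, (X - C (ζ^i)) := by
          rw [hrange, Finset.prod_insert h0s]; simp
      _ = (X:Polynomial ℂ)^n - 1 := hfac.symm
      _ = ((X:Polynomial ℂ) - 1) * ∑ j ∈ Finset.range n, (X:Polynomial ℂ)^j := by
          rw [mul_comm, geom_sum_mul]
  -- nonvanishing
  have hne : ∀ k ∈ s, (1 - ζ^k) ≠ 0 := by
    intro k hk
    rw [hsdef, Finset.mem_Ioo] at hk
    exact fun h => hprim.pow_ne_one_of_pos_of_lt hk.1.ne' hk.2 (by linear_combination -h)
  -- evaluation at 1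
  have hevalQ : ∏ k ∈ s, (1 - ζ^k) = (n:ℂ) := by
    have := congrArg (Polynomial.eval 1) hQ
    simpa [Polynomial.eval_prod, Polynomial.eval_finset_sum] using this
  have herase : ∀ k ∈ s, (1 - ζ^k) * ∏ j ∈ s.erase k, (1 - ζ^j) = (n:ℂ) := by
    intro k hk
    rw [Finset.mul_prod_erase s (fun j => (1:ℂ) - ζ^j) hk, hevalQ]
  have herased : ∀ k ∈ s, ∏ j ∈ s.erase k, (1 - ζ^j) = (n:ℂ) / (1 - ζ^k) := by
    intro k hk
    rw [eq_div_iff (hne k hk)]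
    linear_combination herase k hk
  have herase2 : ∀ k ∈ s, ∀ m ∈ s.erase k,
      ∏ j ∈ (s.erase k).erase m, (1 - ζ^j) = (n:ℂ) / ((1 - ζ^k) * (1 - ζ^m)) := by
    intro k hk m hm
    have hms : m ∈ s := Finset.mem_of_mem_erase hm
    have h1 : (1 - ζ^m) * ∏ j ∈ (s.erase k).erase m, (1 - ζ^j)
        = ∏ j ∈ s.erase k, (1 - ζ^j) :=
      Finset.mul_prod_erase (s.erase k) (fun j => (1:ℂ) - ζ^j) hm
    rw [eq_div_iff (mul_ne_zero (hne k hk) (hne m hms))]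
    linear_combination (1 - ζ^k) * h1 + herase k hk
  -- first derivative evaluated at 1
  have hD1 : ∑ k ∈ s, ∏ j ∈ s.erase k, (1 - ζ^j) = (n:ℂ)*((n:ℂ)-1)/2 := by
    have := congrArg (Polynomial.eval 1) (congrArg derivative hQ)
    rw [deriv_prod', derivative_sum] at this
    simp only [derivative_X_sub_C, mul_one] at this
    rw [← sumA n]
    simpa [Polynomial.eval_finset_sum, Polynomial.eval_prod, derivative_X_pow] using this
  -- second derivative evaluated at 1
  have hD2 : ∑ k ∈ s, ∑ m ∈ s.erase k, ∏ j ∈ (s.erase k).erase m, (1 - ζ^j)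
      = (n:ℂ)*((n:ℂ)-1)*((n:ℂ)-2)/3 := by
    have := congrArg (Polynomial.eval 1) (congrArg derivative (congrArg derivative hQ))
    rw [deriv_prod'] at this
    simp only [derivative_X_sub_C, mul_one] at this
    rw [derivative_sum, derivative_sum] at this
    simp only [deriv_prod', derivative_X_sub_C, mul_one] at this
    rw [← sumB n]
    simpa [Polynomial.eval_finset_sum, Polynomial.eval_prod, derivative_X_pow,
      derivative_mul, derivative_C] using this
  -- introduce the inverse values
  set S : ℂ := ∑ k ∈ s, 1/(1 - ζ^k) with hSdef
  set q : ℂ := ∑ k ∈ s, 1/(1 - ζ^k)^2 with hqdef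
  have hS1 : (n:ℂ) * S = (n:ℂ)*((n:ℂ)-1)/2 := by
    rw [hSdef, Finset.mul_sum, ← hD1]
    exact Finset.sum_congr rfl fun k hk => by rw [herased k hk, mul_one_div]
  have hS : S = ((n:ℂ)-1)/2 := by
    apply mul_left_cancel₀ hn'
    rw [hS1]; ring
  have hstep : ∀ k ∈ s, ∑ m ∈ s.erase k, (n:ℂ) / ((1 - ζ^k) * (1 - ζ^m))
      = (n:ℂ) * ((1/(1 - ζ^k)) * (S - 1/(1 - ζ^k))) := by
    intro k hk
    rw [hSdef, ← Finset.sum_erase_eq_sub hk, Finset.mul_sum, Finset.mul_sum]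
    refine Finset.sum_congr rfl fun m hm => ?_
    have hk' := hne k hk
    have hm' := hne m (Finset.mem_of_mem_erase hm)
    field_simp
  have hD2' : (n:ℂ) * (S*S - q) = (n:ℂ)*((n:ℂ)-1)*((n:ℂ)-2)/3 := by
    calc (n:ℂ) * (S*S - q)
        = ∑ k ∈ s, ((n:ℂ) * (S * (1/(1 - ζ^k))) - (n:ℂ) * (1/(1 - ζ^k)^2)) := by
          rw [Finset.sum_sub_distrib, ← Finset.mul_sum, ← Finset.mul_sum, ← Finset.mul_sum,
            ← hSdef, ← hqdef]
          ring
      _ = ∑ k ∈ s, (n:ℂ) * ((1/(1 - ζ^k)) * (S - 1/(1 - ζ^k))) :=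
          Finset.sum_congr rfl fun k hk => by rw [← one_div_pow]; ring
      _ = ∑ k ∈ s, ∑ m ∈ s.erase k, (n:ℂ) / ((1 - ζ^k) * (1 - ζ^m)) :=
          Finset.sum_congr rfl fun k hk => (hstep k hk).symm
      _ = ∑ k ∈ s, ∑ m ∈ s.erase k, ∏ j ∈ (s.erase k).erase m, (1 - ζ^j) :=
          Finset.sum_congr rfl fun k hk =>
            Finset.sum_congr rfl fun m hm => (herase2 k hk m hm).symm
      _ = (n:ℂ)*((n:ℂ)-1)*((n:ℂ)-2)/3 := hD2
  have hq : q = -(((n : ℂ) - 1) * ((n : ℂ) - 5)) / 12 := by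
    apply mul_left_cancel₀ hn'
    have h2 : (n:ℂ) * q = (n:ℂ) * (S*S) - (n:ℂ)*((n:ℂ)-1)*((n:ℂ)-2)/3 := by
      linear_combination -hD2'
    rw [h2, hS]; ring
  rw [hIcc, ← hqdef, hq]
end

section
/- Let n ≥ 2 and ζ = exp(2πi/n). Then the sum over k = 1 to n-1 of 1/(1 - ζ^k)^3 equals -(n-1)(n-3)/8. -/
open Complex Finset

private lemma telescope (w : ℂ) (m : ℕ) :
    (1 - w) * ∑ j ∈ range m, (j : ℂ) * w ^ j
      = (∑ j ∈ range m, w ^ j) - 1 - ((m : ℂ) - 1) * w ^ m := by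
  induction m with
  | zero => simp
  | succ m ih =>
    rw [sum_range_succ, sum_range_succ, mul_add]
    rw [ih]; push_cast; ring

private lemma gauss1 (m : ℕ) : ∑ j ∈ range m, (j : ℂ) = m * (m - 1) / 2 := by
  induction m with
  | zero => simp
  | succ m ih => rw [sum_range_succ, ih]; push_cast; ring

private lemma gauss2 (m : ℕ) : ∑ j ∈ range m, (j : ℂ) ^ 2 = m * (m - 1) * (2 * m - 1) / 6 := by
  induction m with
  | zero => simp
  | succ m ih => rw [sum_range_succ, ih]; push_cast; ring

theorem sum_inv_cube_one_sub_root_of_unity (n : ℕ) (hn : 2 ≤ n)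
    (ζ : ℂ) (hζ : ζ = Complex.exp (2 * Real.pi * Complex.I / n)) :
    ∑ k ∈ Finset.Icc 1 (n - 1), 1 / (1 - ζ ^ k) ^ 3 =
      -(((n : ℂ) - 1) * ((n : ℂ) - 3)) / 8 := by
  have hn0 : (n : ℂ) ≠ 0 := Nat.cast_ne_zero.mpr (by omega)
  have hprim : IsPrimitiveRoot ζ n := by
    rw [hζ]; exact Complex.isPrimitiveRoot_exp n (by omega)
  have hζn : ζ ^ n = 1 := hprim.pow_eq_one
  have hdvd : ∀ s : ℕ, ζ ^ s = 1 ↔ n ∣ s := fun s => hprim.pow_eq_one_iff_dvd s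
  set K := Finset.Icc 1 (n - 1) with hK
  have hrange : range n = insert 0 K := by ext x; simp [hK]; omega
  have h0K : (0 : ℕ) ∉ K := by simp [hK]
  -- orthogonality
  have hc : ∀ s : ℕ, ∑ k ∈ K, (ζ ^ s) ^ k = (if n ∣ s then (n : ℂ) else 0) - 1 := by
    intro s
    have hr : ∑ k ∈ range n, (ζ ^ s) ^ k = if n ∣ s then (n : ℂ) else 0 := by
      by_cases h : n ∣ s
      · rw [if_pos h, (hdvd s).mpr h]; simp
      · rw [if_neg h, geom_sum_eq (fun h1 => h ((hdvd s).mp h1))]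
        rw [← pow_mul, mul_comm s n, pow_mul, hζn, one_pow]
        simp
    rw [hrange, sum_insert h0K] at hr
    rw [← hr]; simp
  -- each k in K gives nontrivial root
  have hne1 : ∀ k ∈ K, ζ ^ k ≠ 1 := by
    intro k hk h
    rw [hdvd] at h
    simp [hK] at hk
    have := Nat.le_of_dvd (by omega) h
    omega
  have hsub : ∀ k ∈ K, (1 : ℂ) - ζ ^ k ≠ 0 := by
    intro k hk
    exact sub_ne_zero.mpr (fun h => hne1 k hk h.symm)
  -- key representation
  have hA : ∀ k ∈ K, 1 / (1 - ζ ^ k) = (∑ j ∈ range n, (j : ℂ) * (ζ ^ j) ^ k) / (-(n : ℂ)) := by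
    intro k hk
    have hg : ∑ j ∈ range n, (ζ ^ k) ^ j = 0 := by
      rw [geom_sum_eq (hne1 k hk), ← pow_mul, mul_comm k n, pow_mul, hζn, one_pow]
      simp
    have ht := telescope (ζ ^ k) n
    rw [hg, ← pow_mul, mul_comm k n, pow_mul, hζn, one_pow] at ht
    have ht' : (1 - ζ ^ k) * ∑ j ∈ range n, (j : ℂ) * (ζ ^ j) ^ k = -(n : ℂ) := by
      have : ∑ j ∈ range n, (j : ℂ) * (ζ ^ j) ^ k = ∑ j ∈ range n, (j : ℂ) * (ζ ^ k) ^ j := by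
        refine Finset.sum_congr rfl fun j hj => ?_
        rw [← pow_mul, ← pow_mul, mul_comm j k]
      rw [this, ht]; ring
    rw [div_eq_div_iff (hsub k hk) (by simpa using hn0)]
    linear_combination -ht'
  -- S1
  have hS1 : ∑ k ∈ K, 1 / (1 - ζ ^ k) = ((n : ℂ) - 1) / 2 := by
    rw [Finset.sum_congr rfl hA, ← Finset.sum_div, Finset.sum_comm]
    have h1 : ∀ j ∈ range n, ∑ k ∈ K, (j : ℂ) * (ζ ^ j) ^ k = -(j : ℂ) := by
      intro j hj
      rw [← Finset.mul_sum, hc j]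
      rcases Nat.eq_zero_or_pos j with h | h
      · simp [h]
      · rw [if_neg (fun hd => by simp at hj; have := Nat.le_of_dvd h hd; omega)]; ring
    rw [Finset.sum_congr rfl h1]
    rw [Finset.sum_neg_distrib]
    rw [gauss1]
    field_simp
  -- S2
  have hG1 : ∑ j ∈ range n, (j : ℂ) = n * (n - 1) / 2 := gauss1 n
  have hS2 : ∑ k ∈ K, (1 / (1 - ζ ^ k)) ^ 2 = ((n : ℂ) - 1) * (5 - n) / 12 := by
    have step1 : ∀ k ∈ K, (1 / (1 - ζ ^ k)) ^ 2
        = (∑ j ∈ range n, ∑ l ∈ range n, (j : ℂ) * l * (ζ ^ (j + l)) ^ k) / (n : ℂ) ^ 2 := by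
      intro k hk
      rw [hA k hk, div_pow, sq, Finset.sum_mul_sum]
      rw [show (-(n:ℂ))^2 = (n:ℂ)^2 by ring]
      congr 1
      refine Finset.sum_congr rfl fun j _ => Finset.sum_congr rfl fun l _ => ?_
      rw [pow_add, mul_pow]
      ring
    rw [Finset.sum_congr rfl step1, ← Finset.sum_div, Finset.sum_comm]
    have step2 : ∀ j ∈ range n, ∑ k ∈ K, ∑ l ∈ range n, (j : ℂ) * l * (ζ ^ (j + l)) ^ k
        = ∑ l ∈ range n, (j : ℂ) * l * ((if n ∣ (j + l) then (n : ℂ) else 0) - 1) := by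
      intro j _
      rw [Finset.sum_comm]
      refine Finset.sum_congr rfl fun l _ => ?_
      rw [← Finset.mul_sum, hc (j + l)]
    rw [Finset.sum_congr rfl step2]
    have step3 : ∀ j ∈ range n, ∑ l ∈ range n, (j : ℂ) * l * ((if n ∣ (j + l) then (n : ℂ) else 0) - 1)
        = (j : ℂ) * ((n : ℂ) - j) * n - (j : ℂ) * (n * (n - 1) / 2) := by
      intro j hj
      simp only [mem_range] at hj
      have expand : ∀ l ∈ range n, (j : ℂ) * l * ((if n ∣ (j + l) then (n : ℂ) else 0) - 1)
          = (j : ℂ) * l * (if n ∣ (j + l) then (n : ℂ) else 0) - (j : ℂ) * l := by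
        intro l _; ring
      rw [Finset.sum_congr rfl expand, Finset.sum_sub_distrib, ← Finset.mul_sum, hG1]
      congr 1
      rcases Nat.eq_zero_or_pos j with h0 | h0
      · subst h0
        simp
      · rw [Finset.sum_eq_single_of_mem (n - j) (by simp; omega)]
        · rw [if_pos (by rw [(by omega : j + (n - j) = n)] : n ∣ (j + (n - j)))]
          rw [Nat.cast_sub (by omega : j ≤ n)]
        · intro l hl hlne
          simp only [mem_range] at hl
          rw [if_neg, mul_zero]
          intro hd
          obtain ⟨c, hc'⟩ := hd
          rcases c with _ | _ | c
          · omega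
          · omega
          · have : n * 2 ≤ n * (c + 1 + 1) := Nat.mul_le_mul_left _ (by omega)
            omega
    rw [Finset.sum_congr rfl step3, Finset.sum_sub_distrib]
    have e1 : ∑ j ∈ range n, (j : ℂ) * ((n : ℂ) - j) * n
        = (n:ℂ) * ((n:ℂ) * (n * (n-1)/2) - (n * (n - 1) * (2 * n - 1) / 6)) := by
      have : ∀ j ∈ range n, (j : ℂ) * ((n : ℂ) - j) * n
          = (n:ℂ) * ((n:ℂ) * j - (j:ℂ)^2) := by intro j _; ring
      rw [Finset.sum_congr rfl this, ← Finset.mul_sum, Finset.sum_sub_distrib,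
        ← Finset.mul_sum, hG1, gauss2]
    have e2 : ∑ j ∈ range n, (j : ℂ) * ((n:ℂ) * (n - 1) / 2)
        = (n * (n-1)/2) * (n * (n-1)/2) := by
      rw [← Finset.sum_mul, hG1]
    rw [e1, e2]
    field_simp
    ring
  -- pairing
  have hpair : ∀ k ∈ K, 1 / (1 - ζ ^ (n - k)) = 1 - 1 / (1 - ζ ^ k) := by
    intro k hk
    have hkK : 1 ≤ k ∧ k ≤ n - 1 := by simpa [hK] using hk
    have hnkK : n - k ∈ K := by simp [hK]; omega
    have hmul : ζ ^ (n - k) * ζ ^ k = 1 := by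
      rw [← pow_add, (by omega : n - k + k = n), hζn]
    have h1 := hsub k hk
    have h2 := hsub (n - k) hnkK
    field_simp
    linear_combination -hmul
  have hrev : ∑ k ∈ K, (1 / (1 - ζ ^ k)) ^ 3 = ∑ k ∈ K, (1 - 1 / (1 - ζ ^ k)) ^ 3 := by
    have : ∑ k ∈ K, (1 / (1 - ζ ^ k)) ^ 3 = ∑ k ∈ K, (1 / (1 - ζ ^ (n - k))) ^ 3 := by
      refine Finset.sum_nbij' (fun k => n - k) (fun k => n - k) ?_ ?_ ?_ ?_ ?_
      · intro a ha; simp [hK] at ha ⊢; omega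
      · intro a ha; simp [hK] at ha ⊢; omega
      · intro a ha; simp [hK] at ha; omega
      · intro a ha; simp [hK] at ha; omega
      · intro a ha
        congr 2
        simp [hK] at ha
        rw [(by omega : n - (n - a) = a)]
    rw [this]
    exact Finset.sum_congr rfl fun k hk => by rw [hpair k hk]
  have hcard : ∑ k ∈ K, (1 : ℂ) = (n : ℂ) - 1 := by
    rw [Finset.sum_const, hK, Nat.card_Icc]
    rw [(by omega : n - 1 + 1 - 1 = n - 1), nsmul_eq_mul, mul_one, Nat.cast_sub (by omega)]
    simp
  have hsum3 : (2 : ℂ) * ∑ k ∈ K, (1 / (1 - ζ ^ k)) ^ 3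
      = ((n : ℂ) - 1) - 3 * (((n : ℂ) - 1) / 2) + 3 * (((n : ℂ) - 1) * (5 - n) / 12) := by
    rw [two_mul]
    nth_rewrite 2 [hrev]
    rw [← Finset.sum_add_distrib]
    have : ∀ k ∈ K, (1 / (1 - ζ ^ k)) ^ 3 + (1 - 1 / (1 - ζ ^ k)) ^ 3
        = 1 - 3 * (1 / (1 - ζ ^ k)) + 3 * (1 / (1 - ζ ^ k)) ^ 2 := by intro k _; ring
    rw [Finset.sum_congr rfl this]
    have expand : ∑ k ∈ K, ((1:ℂ) - 3 * (1 / (1 - ζ ^ k)) + 3 * (1 / (1 - ζ ^ k)) ^ 2)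
        = (∑ k ∈ K, (1:ℂ)) - 3 * (∑ k ∈ K, 1 / (1 - ζ ^ k)) + 3 * ∑ k ∈ K, (1 / (1 - ζ ^ k)) ^ 2 := by
      rw [Finset.sum_add_distrib, Finset.sum_sub_distrib, Finset.mul_sum, Finset.mul_sum]
    rw [expand, hcard, hS1, hS2]
  have hfinal : ∑ k ∈ K, 1 / (1 - ζ ^ k) ^ 3 = ∑ k ∈ K, (1 / (1 - ζ ^ k)) ^ 3 := by
    refine Finset.sum_congr rfl fun k _ => ?_
    rw [div_pow, one_pow]
  rw [hK] at hfinal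
  rw [hfinal]
  linear_combination hsum3 / 2
end

section
/- Let n ≥ 2 and ζ = exp(2πi/n). Then the sum over k = 1 to n-1 of 1/(1 - ζ^k)^4 equals (n-1)(n³ + n² - 109n + 251)/720. -/
open Complex Finset Polynomial

-- derivative of sum of inverse powers
lemma aux_hasDerivAt_invpow_sum {ι : Type*} (s : Finset ι) (a : ι → ℂ) (m : ℕ) (hm : m ≠ 0)
    (z : ℂ) (hz : ∀ k ∈ s, z ≠ a k) :
    HasDerivAt (fun w => ∑ k ∈ s, ((w - a k) ^ m)⁻¹)
      (-(m : ℂ) * ∑ k ∈ s, ((z - a k) ^ (m + 1))⁻¹) z := by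
  rw [Finset.mul_sum]
  apply HasDerivAt.fun_sum
  intro k hk
  have hzk : z - a k ≠ 0 := sub_ne_zero.mpr (hz k hk)
  have h1 : HasDerivAt (fun w => (w - a k) ^ m) ((m : ℂ) * (z - a k) ^ (m - 1) * 1) z :=
    ((hasDerivAt_id z).sub_const (a k)).pow m
  have h2 := h1.inv (pow_ne_zero m hzk)
  refine h2.congr_deriv (Eq.symm ?_)
  rw [mul_one]
  have h3 : ((z - a k) ^ m) ^ 2 = (z - a k) ^ (m + 1) * (z - a k) ^ (m - 1) := by
    rw [← pow_add, ← pow_mul]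
    congr 1
    omega
  rw [eq_div_iff (pow_ne_zero _ (pow_ne_zero m hzk)), h3]
  field_simp

-- logarithmic derivative identity
lemma aux_log_deriv {ι : Type*} [DecidableEq ι] (s : Finset ι) (a : ι → ℂ) (z : ℂ)
    (hz : ∀ k ∈ s, z ≠ a k) :
    (∑ k ∈ s, ((z - a k) ^ 1)⁻¹) * eval z (∏ k ∈ s, (X - C (a k))) =
      eval z (derivative (∏ k ∈ s, (X - C (a k)))) := by
  induction s using Finset.induction with
  | empty => simp
  | insert i t hi ih =>
    have hzi : z - a i ≠ 0 := sub_ne_zero.mpr (hz i (mem_insert_self i t))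
    have ih' := ih (fun k hk => hz k (mem_insert_of_mem hk))
    rw [Finset.prod_insert hi, Finset.sum_insert hi, derivative_mul, derivative_sub,
      derivative_X, derivative_C, sub_zero, one_mul, eval_add, eval_mul, eval_mul,
      eval_sub, eval_X, eval_C]
    rw [← ih']
    field_simp

lemma aux_sum_desc_nat (m : ℕ) : ∀ N : ℕ,
    (m + 1) * ∑ j ∈ Finset.range N, j.descFactorial m = N.descFactorial (m + 1) := by
  intro N
  induction N with
  | zero => simp
  | succ N ih =>
    rw [Finset.sum_range_succ, Nat.mul_add, ih, Nat.succ_descFactorial_succ]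
    rcases lt_or_ge N m with h | h
    · simp [Nat.descFactorial_eq_zero_iff_lt.mpr h,
        Nat.descFactorial_eq_zero_iff_lt.mpr (h.trans m.lt_succ_self)]
    · rw [Nat.descFactorial_succ, ← Nat.add_mul]
      congr 1
      omega

lemma aux_sum_desc (m N : ℕ) :
    ((m : ℂ) + 1) * ∑ j ∈ Finset.range N, (j.descFactorial m : ℂ) =
      (N.descFactorial (m + 1) : ℂ) := by
  have := aux_sum_desc_nat m N
  push_cast [← this]
  ring

lemma aux_cast2 (N : ℕ) : (N.descFactorial 2 : ℂ) = N * (N - 1) := by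
  cases N with
  | zero => simp
  | succ M => push_cast [Nat.succ_descFactorial_succ, Nat.descFactorial_one]; ring

lemma aux_cast3 (N : ℕ) : (N.descFactorial 3 : ℂ) = N * (N - 1) * (N - 2) := by
  cases N with
  | zero => simp
  | succ M => push_cast [Nat.succ_descFactorial_succ, aux_cast2]; ring

lemma aux_cast4 (N : ℕ) : (N.descFactorial 4 : ℂ) = N * (N - 1) * (N - 2) * (N - 3) := by
  cases N with
  | zero => simp
  | succ M => push_cast [Nat.succ_descFactorial_succ, aux_cast3]; ring

lemma aux_cast5 (N : ℕ) :
    (N.descFactorial 5 : ℂ) = N * (N - 1) * (N - 2) * (N - 3) * (N - 4) := by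
  cases N with
  | zero => simp
  | succ M => push_cast [Nat.succ_descFactorial_succ, aux_cast4]; ring

theorem sum_inv_pow4_one_sub_root_of_unity (n : ℕ) (hn : 2 ≤ n)
    (ζ : ℂ) (hζ : ζ = Complex.exp (2 * Real.pi * Complex.I / n)) :
    ∑ k ∈ Finset.Icc 1 (n - 1), 1 / (1 - ζ ^ k) ^ 4 =
      ((n : ℂ) - 1) * ((n : ℂ) ^ 3 + (n : ℂ) ^ 2 - 109 * n + 251) / 720 := by
  have hn0 : (n : ℂ) ≠ 0 := Nat.cast_ne_zero.mpr (by omega)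
  have hprim : IsPrimitiveRoot ζ n := hζ ▸ Complex.isPrimitiveRoot_exp n (by omega)
  set s : Finset ℕ := Finset.Icc 1 (n - 1) with hs
  set Q : Polynomial ℂ := ∏ k ∈ s, (X - C (ζ ^ k)) with hQdef
  set U : Set ℂ := {z | ∀ k ∈ s, z ≠ ζ ^ k} with hUdef
  have hUopen : IsOpen U := by
    have hU : U = ⋂ k ∈ s, ({ζ ^ k}ᶜ : Set ℂ) := by
      ext z; simp [hUdef]
    rw [hU]
    exact isOpen_biInter_finset fun k _ => isOpen_compl_singleton
  have h1U : (1 : ℂ) ∈ U := by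
    intro k hk
    rw [hs, Finset.mem_Icc] at hk
    exact fun h => hprim.pow_ne_one_of_pos_of_lt (by omega) (by omega) h.symm
  -- Q is the geometric sum
  have hQgeom : Q = ∑ j ∈ Finset.range n, (X : Polynomial ℂ) ^ j := by
    have h1 : ((X : Polynomial ℂ) - C 1) * Q = X ^ n - C 1 := by
      rw [X_pow_sub_C_eq_prod hprim (by omega : 0 < n) (one_pow n)]
      rw [Finset.range_eq_Ico, Finset.prod_eq_prod_Ico_succ_bot (by omega : 0 < n)]
      have : Finset.Ico 1 n = s := by
        rw [hs, ← Finset.Ico_add_one_right_eq_Icc]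
        congr 1
        omega
      rw [this]
      simp [hQdef, mul_comm]
    have h2 : ((X : Polynomial ℂ) - C 1) * ∑ j ∈ Finset.range n, (X : Polynomial ℂ) ^ j
        = X ^ n - C 1 := by
      have := geom_sum_mul (X : Polynomial ℂ) n
      rw [mul_comm] at this
      simpa using this
    exact mul_left_cancel₀ (X_sub_C_ne_zero 1) (h1.trans h2.symm)
  -- transfer of derivatives along equality on U
  have step : ∀ (f : ℂ → ℂ) (p : Polynomial ℂ), Set.EqOn f (fun w => eval w p) U →
      ∀ z ∈ U, ∀ f' : ℂ, HasDerivAt f f' z → f' = eval z (derivative p) := by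
    intro f p hEq z hz f' hf
    have h1 : deriv f z = deriv (fun w => eval w p) z :=
      Filter.EventuallyEq.deriv_eq (Filter.eventuallyEq_of_mem (hUopen.mem_nhds hz) hEq)
    rwa [hf.deriv, Polynomial.deriv] at h1
  have key0 : Set.EqOn (fun z => (∑ k ∈ s, ((z - ζ ^ k) ^ 1)⁻¹) * eval z Q)
      (fun z => eval z (derivative Q)) U := by
    intro z hz
    exact aux_log_deriv s (fun k => ζ ^ k) z hz
  have key1 : Set.EqOn (fun z =>
        (-1 : ℂ) * (∑ k ∈ s, ((z - ζ ^ k) ^ 2)⁻¹) * eval z Q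
          + (∑ k ∈ s, ((z - ζ ^ k) ^ 1)⁻¹) * eval z (derivative Q))
      (fun z => eval z (derivative (derivative Q))) U := by
    intro z hz
    have hF := aux_hasDerivAt_invpow_sum s (fun k => ζ ^ k) 1 one_ne_zero z hz
    have hf := hF.mul (Q.hasDerivAt z)
    have h := step _ _ key0 z hz _ hf
    dsimp only
    rw [← h]
    norm_num
  have key2 : Set.EqOn (fun z =>
        (2 : ℂ) * (∑ k ∈ s, ((z - ζ ^ k) ^ 3)⁻¹) * eval z Q
          + (-2 : ℂ) * (∑ k ∈ s, ((z - ζ ^ k) ^ 2)⁻¹) * eval z (derivative Q)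
          + (∑ k ∈ s, ((z - ζ ^ k) ^ 1)⁻¹) * eval z (derivative (derivative Q)))
      (fun z => eval z (derivative (derivative (derivative Q)))) U := by
    intro z hz
    have hF2 := aux_hasDerivAt_invpow_sum s (fun k => ζ ^ k) 2 two_ne_zero z hz
    have hF1 := aux_hasDerivAt_invpow_sum s (fun k => ζ ^ k) 1 one_ne_zero z hz
    have hf := ((hF2.const_mul (-1 : ℂ)).mul (Q.hasDerivAt z)).add
      (hF1.mul ((derivative Q).hasDerivAt z))
    have h := step _ _ key1 z hz _ hf
    dsimp only
    rw [← h]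
    norm_num
    ring
  have key3 : Set.EqOn (fun z =>
        (-6 : ℂ) * (∑ k ∈ s, ((z - ζ ^ k) ^ 4)⁻¹) * eval z Q
          + (6 : ℂ) * (∑ k ∈ s, ((z - ζ ^ k) ^ 3)⁻¹) * eval z (derivative Q)
          + (-3 : ℂ) * (∑ k ∈ s, ((z - ζ ^ k) ^ 2)⁻¹) * eval z (derivative (derivative Q))
          + (∑ k ∈ s, ((z - ζ ^ k) ^ 1)⁻¹) * eval z (derivative (derivative (derivative Q))))
      (fun z => eval z (derivative (derivative (derivative (derivative Q))))) U := by
    intro z hz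
    have hF3 := aux_hasDerivAt_invpow_sum s (fun k => ζ ^ k) 3 three_ne_zero z hz
    have hF2 := aux_hasDerivAt_invpow_sum s (fun k => ζ ^ k) 2 two_ne_zero z hz
    have hF1 := aux_hasDerivAt_invpow_sum s (fun k => ζ ^ k) 1 one_ne_zero z hz
    have hf := (((hF3.const_mul (2 : ℂ)).mul (Q.hasDerivAt z)).add
      ((hF2.const_mul (-2 : ℂ)).mul ((derivative Q).hasDerivAt z))).add
      (hF1.mul ((derivative (derivative Q)).hasDerivAt z))
    have h := step _ _ key2 z hz _ hf
    dsimp only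
    rw [← h]
    norm_num
    ring
  -- evaluations of iterated derivatives at 1
  have hIter : ∀ m : ℕ, eval 1 (derivative^[m] Q) = ∑ j ∈ Finset.range n, (j.descFactorial m : ℂ) := by
    intro m
    rw [hQgeom, Polynomial.iterate_derivative_sum]
    rw [eval_finset_sum]
    refine Finset.sum_congr rfl fun j _ => ?_
    rw [Polynomial.iterate_derivative_X_pow_eq_natCast_mul]
    simp
  have hq0 : eval 1 Q = (n : ℂ) := by
    have := hIter 0
    simpa using this
  have hq1 : eval 1 (derivative Q) = (n : ℂ) * (n - 1) / 2 := by
    have h := hIter 1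
    rw [Function.iterate_one] at h
    have h2 := aux_sum_desc 1 n
    rw [← h] at h2
    rw [aux_cast2] at h2
    field_simp at h2 ⊢
    linear_combination h2
  have hq2 : eval 1 (derivative (derivative Q)) = (n : ℂ) * (n - 1) * (n - 2) / 3 := by
    have h := hIter 2
    have hit : derivative^[2] Q = derivative (derivative Q) := rfl
    rw [hit] at h
    have h2 := aux_sum_desc 2 n
    rw [← h, aux_cast3] at h2
    field_simp at h2 ⊢
    linear_combination h2
  have hq3 : eval 1 (derivative (derivative (derivative Q)))
      = (n : ℂ) * (n - 1) * (n - 2) * (n - 3) / 4 := by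
    have h := hIter 3
    have hit : derivative^[3] Q = derivative (derivative (derivative Q)) := rfl
    rw [hit] at h
    have h2 := aux_sum_desc 3 n
    rw [← h, aux_cast4] at h2
    field_simp at h2 ⊢
    linear_combination h2
  have hq4 : eval 1 (derivative (derivative (derivative (derivative Q))))
      = (n : ℂ) * (n - 1) * (n - 2) * (n - 3) * (n - 4) / 5 := by
    have h := hIter 4
    have hit : derivative^[4] Q = derivative (derivative (derivative (derivative Q))) := rfl
    rw [hit] at h
    have h2 := aux_sum_desc 4 n
    rw [← h, aux_cast5] at h2
    field_simp at h2 ⊢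
    linear_combination h2
  -- specialize at 1
  have e0 := key0 h1U
  have e1 := key1 h1U
  have e2 := key2 h1U
  have e3 := key3 h1U
  dsimp only at e0 e1 e2 e3
  rw [hq0, hq1] at e0
  rw [hq0, hq1, hq2] at e1
  rw [hq0, hq1, hq2, hq3] at e2
  rw [hq0, hq1, hq2, hq3, hq4] at e3
  set A := ∑ k ∈ s, (((1 : ℂ) - ζ ^ k) ^ 1)⁻¹ with hA
  set B := ∑ k ∈ s, (((1 : ℂ) - ζ ^ k) ^ 2)⁻¹ with hB
  set C' := ∑ k ∈ s, (((1 : ℂ) - ζ ^ k) ^ 3)⁻¹ with hC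
  set D := ∑ k ∈ s, (((1 : ℂ) - ζ ^ k) ^ 4)⁻¹ with hD
  have hgoal : ∑ k ∈ Finset.Icc 1 (n - 1), 1 / (1 - ζ ^ k) ^ 4 = D := by
    rw [hD]
    refine Finset.sum_congr rfl fun k _ => ?_
    rw [one_div]
  rw [hgoal]
  -- solve the linear system
  have hBn : B * n = (n : ℂ) * (n - 1) * (5 - n) / 12 := by
    linear_combination (-1 : ℂ) * e1 + ((n : ℂ) - 1) / 2 * e0
  have hCn : C' * n = (n : ℂ) * (n - 1) * (3 - n) / 8 := by
    linear_combination (1 / 2 : ℂ) * e2 + ((n : ℂ) - 1) / 2 * hBn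
      - ((n : ℂ) - 1) * ((n : ℂ) - 2) / 6 * e0
  have hDn : D * n = (n : ℂ) * (n - 1) * ((n : ℂ) ^ 3 + (n : ℂ) ^ 2 - 109 * n + 251) / 720 := by
    linear_combination (-1 / 6 : ℂ) * e3 + ((n : ℂ) - 1) / 2 * hCn
      - ((n : ℂ) - 1) * ((n : ℂ) - 2) / 6 * hBn
      + ((n : ℂ) - 1) * ((n : ℂ) - 2) * ((n : ℂ) - 3) / 24 * e0
  have hfin : D * n = (((n : ℂ) - 1) * ((n : ℂ) ^ 3 + (n : ℂ) ^ 2 - 109 * n + 251) / 720) * n := by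
    rw [hDn]; ring
  exact mul_right_cancel₀ hn0 hfin
end

section
/- Let n ≥ 2 and ζ = exp(2πi/n). Then the sum over k = 1 to n-1 of 1/(1 - ζ^k)^5 equals (n-1)(n-5)(n² + 6n - 19)/288. -/
open Complex Finset

private lemma hockey (n m : ℕ) : ∑ j ∈ Finset.range n, j.choose m = n.choose (m + 1) := by
  induction n with
  | zero => simp
  | succ n ih => rw [Finset.sum_range_succ, ih, Nat.choose_succ_succ n m, Nat.add_comm]

private lemma castC2 (n : ℕ) : ((n.choose 2 : ℕ) : ℂ) * 2 = n * (n - 1) := by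
  induction n with
  | zero => simp
  | succ n ih =>
    rw [Nat.choose_succ_succ]
    push_cast [Nat.choose_one_right]
    push_cast at ih
    linear_combination ih

private lemma castC3 (n : ℕ) : ((n.choose 3 : ℕ) : ℂ) * 6 = n * (n - 1) * (n - 2) := by
  induction n with
  | zero => simp
  | succ n ih =>
    rw [Nat.choose_succ_succ]
    push_cast
    push_cast at ih
    linear_combination ih + 3 * castC2 n

private lemma castC4 (n : ℕ) : ((n.choose 4 : ℕ) : ℂ) * 24 = n * (n - 1) * (n - 2) * (n - 3) := by
  induction n with
  | zero => simp
  | succ n ih =>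
    rw [Nat.choose_succ_succ]
    push_cast
    push_cast at ih
    linear_combination ih + 4 * castC3 n

private lemma castC5 (n : ℕ) :
    ((n.choose 5 : ℕ) : ℂ) * 120 = n * (n - 1) * (n - 2) * (n - 3) * (n - 4) := by
  induction n with
  | zero => simp
  | succ n ih =>
    rw [Nat.choose_succ_succ]
    push_cast
    push_cast at ih
    linear_combination ih + 5 * castC4 n

private lemma castC6 (n : ℕ) :
    ((n.choose 6 : ℕ) : ℂ) * 720 = n * (n - 1) * (n - 2) * (n - 3) * (n - 4) * (n - 5) := by
  induction n with
  | zero => simp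
  | succ n ih =>
    rw [Nat.choose_succ_succ]
    push_cast
    push_cast at ih
    linear_combination ih + 6 * castC5 n

private lemma G_rec (n : ℕ) (x y : ℂ) (hxn : x ^ n = 1) (hy : (1 - x) * y = 1) (m : ℕ) :
    ∑ j ∈ Finset.range n, (j.choose (m + 1) : ℂ) * x ^ j
      = (x * ∑ j ∈ Finset.range n, (j.choose m : ℂ) * x ^ j - (n.choose (m + 1) : ℂ)) * y := by
  have key : (1 - x) * (∑ j ∈ Finset.range n, (j.choose (m + 1) : ℂ) * x ^ j)
      = x * (∑ j ∈ Finset.range n, (j.choose m : ℂ) * x ^ j) - (n.choose (m + 1) : ℂ) := by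
    have h1 : ∑ j ∈ Finset.range (n + 1), (j.choose (m + 1) : ℂ) * x ^ j
        = (∑ j ∈ Finset.range n, (j.choose (m + 1) : ℂ) * x ^ j) + (n.choose (m + 1) : ℂ) := by
      rw [Finset.sum_range_succ, hxn]; ring
    have h2 : ∑ j ∈ Finset.range (n + 1), (j.choose (m + 1) : ℂ) * x ^ j
        = ∑ j ∈ Finset.range n, ((j + 1).choose (m + 1) : ℂ) * x ^ (j + 1) := by
      rw [Finset.sum_range_succ']; simp
    have h3 : ∑ j ∈ Finset.range n, ((j + 1).choose (m + 1) : ℂ) * x ^ (j + 1)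
        = x * (∑ j ∈ Finset.range n, (j.choose m : ℂ) * x ^ j)
          + x * (∑ j ∈ Finset.range n, (j.choose (m + 1) : ℂ) * x ^ j) := by
      rw [Finset.mul_sum, Finset.mul_sum, ← Finset.sum_add_distrib]
      refine Finset.sum_congr rfl fun j _ => ?_
      rw [Nat.choose_succ_succ]
      push_cast
      ring
    linear_combination -h1 + h2 + h3
  linear_combination y * key
    - (∑ j ∈ Finset.range n, (j.choose (m + 1) : ℂ) * x ^ j) * hy

private lemma point1 (n : ℕ) (x : ℂ) (hxn : x ^ n = 1) (hx1 : x ≠ 1) :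
    ∑ j ∈ Finset.range n, (j.choose 1 : ℂ) * x ^ j = -(n : ℂ) * (1 - x)⁻¹ := by
  have hy : (1 - x) * (1 - x)⁻¹ = 1 := mul_inv_cancel₀ (sub_ne_zero.mpr (Ne.symm hx1))
  have h0 : ∑ j ∈ Finset.range n, (j.choose 0 : ℂ) * x ^ j = 0 := by
    simp only [Nat.choose_zero_right, Nat.cast_one, one_mul]
    rw [geom_sum_eq hx1, hxn, sub_self, zero_div]
  have h : ∑ j ∈ Finset.range n, (j.choose 1 : ℂ) * x ^ j
      = (x * ∑ j ∈ Finset.range n, (j.choose 0 : ℂ) * x ^ j - (n.choose 1 : ℂ)) * (1 - x)⁻¹ :=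
    G_rec n x (1 - x)⁻¹ hxn hy 0
  rw [h, h0, Nat.choose_one_right]
  ring

private lemma point2 (n : ℕ) (x : ℂ) (hxn : x ^ n = 1) (hx1 : x ≠ 1) :
    ∑ j ∈ Finset.range n, (j.choose 2 : ℂ) * x ^ j
      = -(n : ℂ) * ((1 - x)⁻¹) ^ 2 + ((n : ℂ) - (n.choose 2 : ℂ)) * (1 - x)⁻¹ := by
  have hy : (1 - x) * (1 - x)⁻¹ = 1 := mul_inv_cancel₀ (sub_ne_zero.mpr (Ne.symm hx1))
  have hxy : x * (1 - x)⁻¹ = (1 - x)⁻¹ - 1 := by linear_combination -hy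
  have h : ∑ j ∈ Finset.range n, (j.choose 2 : ℂ) * x ^ j
      = (x * ∑ j ∈ Finset.range n, (j.choose 1 : ℂ) * x ^ j - (n.choose 2 : ℂ)) * (1 - x)⁻¹ :=
    G_rec n x (1 - x)⁻¹ hxn hy 1
  rw [h, point1 n x hxn hx1]
  linear_combination (-(n : ℂ) * (1 - x)⁻¹) * hxy

private lemma point3 (n : ℕ) (x : ℂ) (hxn : x ^ n = 1) (hx1 : x ≠ 1) :
    ∑ j ∈ Finset.range n, (j.choose 3 : ℂ) * x ^ j
      = -(n : ℂ) * ((1 - x)⁻¹) ^ 3 + (2 * (n : ℂ) - (n.choose 2 : ℂ)) * ((1 - x)⁻¹) ^ 2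
        + (-(n : ℂ) + (n.choose 2 : ℂ) - (n.choose 3 : ℂ)) * (1 - x)⁻¹ := by
  have hy : (1 - x) * (1 - x)⁻¹ = 1 := mul_inv_cancel₀ (sub_ne_zero.mpr (Ne.symm hx1))
  have hxy : x * (1 - x)⁻¹ = (1 - x)⁻¹ - 1 := by linear_combination -hy
  have h : ∑ j ∈ Finset.range n, (j.choose 3 : ℂ) * x ^ j
      = (x * ∑ j ∈ Finset.range n, (j.choose 2 : ℂ) * x ^ j - (n.choose 3 : ℂ)) * (1 - x)⁻¹ :=
    G_rec n x (1 - x)⁻¹ hxn hy 2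
  rw [h, point2 n x hxn hx1]
  linear_combination (-(n : ℂ) * ((1 - x)⁻¹) ^ 2 + ((n : ℂ) - (n.choose 2 : ℂ)) * (1 - x)⁻¹) * hxy

private lemma point4 (n : ℕ) (x : ℂ) (hxn : x ^ n = 1) (hx1 : x ≠ 1) :
    ∑ j ∈ Finset.range n, (j.choose 4 : ℂ) * x ^ j
      = -(n : ℂ) * ((1 - x)⁻¹) ^ 4 + (3 * (n : ℂ) - (n.choose 2 : ℂ)) * ((1 - x)⁻¹) ^ 3
        + (-3 * (n : ℂ) + 2 * (n.choose 2 : ℂ) - (n.choose 3 : ℂ)) * ((1 - x)⁻¹) ^ 2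
        + ((n : ℂ) - (n.choose 2 : ℂ) + (n.choose 3 : ℂ) - (n.choose 4 : ℂ)) * (1 - x)⁻¹ := by
  have hy : (1 - x) * (1 - x)⁻¹ = 1 := mul_inv_cancel₀ (sub_ne_zero.mpr (Ne.symm hx1))
  have hxy : x * (1 - x)⁻¹ = (1 - x)⁻¹ - 1 := by linear_combination -hy
  have h : ∑ j ∈ Finset.range n, (j.choose 4 : ℂ) * x ^ j
      = (x * ∑ j ∈ Finset.range n, (j.choose 3 : ℂ) * x ^ j - (n.choose 4 : ℂ)) * (1 - x)⁻¹ :=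
    G_rec n x (1 - x)⁻¹ hxn hy 3
  rw [h, point3 n x hxn hx1]
  linear_combination (-(n : ℂ) * ((1 - x)⁻¹) ^ 3 + (2 * (n : ℂ) - (n.choose 2 : ℂ)) * ((1 - x)⁻¹) ^ 2
    + (-(n : ℂ) + (n.choose 2 : ℂ) - (n.choose 3 : ℂ)) * (1 - x)⁻¹) * hxy

private lemma point5 (n : ℕ) (x : ℂ) (hxn : x ^ n = 1) (hx1 : x ≠ 1) :
    ∑ j ∈ Finset.range n, (j.choose 5 : ℂ) * x ^ j
      = -(n : ℂ) * ((1 - x)⁻¹) ^ 5 + (4 * (n : ℂ) - (n.choose 2 : ℂ)) * ((1 - x)⁻¹) ^ 4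
        + (-6 * (n : ℂ) + 3 * (n.choose 2 : ℂ) - (n.choose 3 : ℂ)) * ((1 - x)⁻¹) ^ 3
        + (4 * (n : ℂ) - 3 * (n.choose 2 : ℂ) + 2 * (n.choose 3 : ℂ) - (n.choose 4 : ℂ)) * ((1 - x)⁻¹) ^ 2
        + (-(n : ℂ) + (n.choose 2 : ℂ) - (n.choose 3 : ℂ) + (n.choose 4 : ℂ) - (n.choose 5 : ℂ)) * (1 - x)⁻¹ := by
  have hy : (1 - x) * (1 - x)⁻¹ = 1 := mul_inv_cancel₀ (sub_ne_zero.mpr (Ne.symm hx1))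
  have hxy : x * (1 - x)⁻¹ = (1 - x)⁻¹ - 1 := by linear_combination -hy
  have h : ∑ j ∈ Finset.range n, (j.choose 5 : ℂ) * x ^ j
      = (x * ∑ j ∈ Finset.range n, (j.choose 4 : ℂ) * x ^ j - (n.choose 5 : ℂ)) * (1 - x)⁻¹ :=
    G_rec n x (1 - x)⁻¹ hxn hy 4
  rw [h, point4 n x hxn hx1]
  linear_combination (-(n : ℂ) * ((1 - x)⁻¹) ^ 4 + (3 * (n : ℂ) - (n.choose 2 : ℂ)) * ((1 - x)⁻¹) ^ 3
    + (-3 * (n : ℂ) + 2 * (n.choose 2 : ℂ) - (n.choose 3 : ℂ)) * ((1 - x)⁻¹) ^ 2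
    + ((n : ℂ) - (n.choose 2 : ℂ) + (n.choose 3 : ℂ) - (n.choose 4 : ℂ)) * (1 - x)⁻¹) * hxy

private lemma orth (n : ℕ) (hn : 2 ≤ n) (ζ : ℂ) (hprim : IsPrimitiveRoot ζ n) (m : ℕ)
    (hm : 1 ≤ m) :
    ∑ k ∈ Finset.Icc 1 (n - 1), ∑ j ∈ Finset.range n, (j.choose m : ℂ) * (ζ ^ k) ^ j
      = -(n.choose (m + 1) : ℂ) := by
  have hIcc : Finset.Icc 1 (n - 1) = Finset.Ico 1 n := by ext x; simp only [Finset.mem_Icc, Finset.mem_Ico]; omega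
  rw [hIcc, Finset.sum_comm]
  have step : ∀ j ∈ Finset.range n,
      ∑ k ∈ Finset.Ico 1 n, (j.choose m : ℂ) * (ζ ^ k) ^ j = -(j.choose m : ℂ) := by
    intro j hj
    rw [Finset.mem_range] at hj
    rcases Nat.eq_zero_or_pos j with hj0 | hj0
    · subst hj0
      simp [Nat.choose_eq_zero_of_lt hm]
    · have hw1 : ζ ^ j ≠ 1 := hprim.pow_ne_one_of_pos_of_lt hj0.ne' hj
      have hwn : (ζ ^ j) ^ n = 1 := by
        rw [← pow_mul, mul_comm, pow_mul, hprim.pow_eq_one, one_pow]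
      have hgeom : ∑ k ∈ Finset.range n, (ζ ^ j) ^ k = 0 := by
        rw [geom_sum_eq hw1, hwn, sub_self, zero_div]
      have hsplit : ∑ k ∈ Finset.range n, (ζ ^ j) ^ k
          = (ζ ^ j) ^ 0 + ∑ k ∈ Finset.Ico 1 n, (ζ ^ j) ^ k := by
        rw [Finset.range_eq_Ico, Finset.sum_eq_sum_Ico_succ_bot (by omega : 0 < n)]
      have hsum : ∑ k ∈ Finset.Ico 1 n, (ζ ^ j) ^ k = -1 := by
        rw [hsplit] at hgeom
        simp only [pow_zero] at hgeom
        linear_combination hgeom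
      calc ∑ k ∈ Finset.Ico 1 n, (j.choose m : ℂ) * (ζ ^ k) ^ j
          = (j.choose m : ℂ) * ∑ k ∈ Finset.Ico 1 n, (ζ ^ j) ^ k := by
            rw [Finset.mul_sum]
            refine Finset.sum_congr rfl fun k _ => ?_
            rw [← pow_mul, mul_comm k j, pow_mul]
        _ = -(j.choose m : ℂ) := by rw [hsum]; ring
  rw [Finset.sum_congr rfl step, Finset.sum_neg_distrib, ← Nat.cast_sum, hockey]

theorem sum_inv_pow5_one_sub_root_of_unity (n : ℕ) (hn : 2 ≤ n)
    (ζ : ℂ) (hζ : ζ = Complex.exp (2 * Real.pi * Complex.I / n)) :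
    ∑ k ∈ Finset.Icc 1 (n - 1), 1 / (1 - ζ ^ k) ^ 5 =
      ((n : ℂ) - 1) * ((n : ℂ) - 5) * ((n : ℂ) ^ 2 + 6 * n - 19) / 288 := by
  have hn0 : (n : ℂ) ≠ 0 := Nat.cast_ne_zero.mpr (by omega)
  have hprim : IsPrimitiveRoot ζ n := by
    rw [hζ]; exact Complex.isPrimitiveRoot_exp n (by omega)
  have hx1 : ∀ k ∈ Finset.Icc 1 (n - 1), ζ ^ k ≠ 1 := by
    intro k hk; rw [Finset.mem_Icc] at hk
    exact hprim.pow_ne_one_of_pos_of_lt (by omega) (by omega)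
  have hxn : ∀ k ∈ Finset.Icc 1 (n - 1), (ζ ^ k) ^ n = 1 := by
    intro k _
    rw [← pow_mul, mul_comm, pow_mul, hprim.pow_eq_one, one_pow]
  have E1 : -((n.choose 2 : ℕ) : ℂ)
      = -(n : ℂ) * ∑ k ∈ Finset.Icc 1 (n - 1), (1 - ζ ^ k)⁻¹ := by
    rw [← orth n hn ζ hprim 1 le_rfl,
      Finset.sum_congr rfl fun k hk => point1 n (ζ ^ k) (hxn k hk) (hx1 k hk)]
    rw [Finset.mul_sum]
  have E2 : -((n.choose 3 : ℕ) : ℂ)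
      = -(n : ℂ) * ∑ k ∈ Finset.Icc 1 (n - 1), ((1 - ζ ^ k)⁻¹) ^ 2
        + ((n : ℂ) - (n.choose 2 : ℂ)) * ∑ k ∈ Finset.Icc 1 (n - 1), (1 - ζ ^ k)⁻¹ := by
    rw [← orth n hn ζ hprim 2 (by omega),
      Finset.sum_congr rfl fun k hk => point2 n (ζ ^ k) (hxn k hk) (hx1 k hk)]
    rw [Finset.sum_add_distrib, Finset.mul_sum, Finset.mul_sum]
  have E3 : -((n.choose 4 : ℕ) : ℂ)
      = -(n : ℂ) * ∑ k ∈ Finset.Icc 1 (n - 1), ((1 - ζ ^ k)⁻¹) ^ 3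
        + (2 * (n : ℂ) - (n.choose 2 : ℂ)) * ∑ k ∈ Finset.Icc 1 (n - 1), ((1 - ζ ^ k)⁻¹) ^ 2
        + (-(n : ℂ) + (n.choose 2 : ℂ) - (n.choose 3 : ℂ))
            * ∑ k ∈ Finset.Icc 1 (n - 1), (1 - ζ ^ k)⁻¹ := by
    rw [← orth n hn ζ hprim 3 (by omega),
      Finset.sum_congr rfl fun k hk => point3 n (ζ ^ k) (hxn k hk) (hx1 k hk)]
    simp only [Finset.sum_add_distrib, Finset.mul_sum]
  have E4 : -((n.choose 5 : ℕ) : ℂ)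
      = -(n : ℂ) * ∑ k ∈ Finset.Icc 1 (n - 1), ((1 - ζ ^ k)⁻¹) ^ 4
        + (3 * (n : ℂ) - (n.choose 2 : ℂ)) * ∑ k ∈ Finset.Icc 1 (n - 1), ((1 - ζ ^ k)⁻¹) ^ 3
        + (-3 * (n : ℂ) + 2 * (n.choose 2 : ℂ) - (n.choose 3 : ℂ))
            * ∑ k ∈ Finset.Icc 1 (n - 1), ((1 - ζ ^ k)⁻¹) ^ 2
        + ((n : ℂ) - (n.choose 2 : ℂ) + (n.choose 3 : ℂ) - (n.choose 4 : ℂ))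
            * ∑ k ∈ Finset.Icc 1 (n - 1), (1 - ζ ^ k)⁻¹ := by
    rw [← orth n hn ζ hprim 4 (by omega),
      Finset.sum_congr rfl fun k hk => point4 n (ζ ^ k) (hxn k hk) (hx1 k hk)]
    simp only [Finset.sum_add_distrib, Finset.mul_sum]
  have E5 : -((n.choose 6 : ℕ) : ℂ)
      = -(n : ℂ) * ∑ k ∈ Finset.Icc 1 (n - 1), ((1 - ζ ^ k)⁻¹) ^ 5
        + (4 * (n : ℂ) - (n.choose 2 : ℂ)) * ∑ k ∈ Finset.Icc 1 (n - 1), ((1 - ζ ^ k)⁻¹) ^ 4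
        + (-6 * (n : ℂ) + 3 * (n.choose 2 : ℂ) - (n.choose 3 : ℂ))
            * ∑ k ∈ Finset.Icc 1 (n - 1), ((1 - ζ ^ k)⁻¹) ^ 3
        + (4 * (n : ℂ) - 3 * (n.choose 2 : ℂ) + 2 * (n.choose 3 : ℂ) - (n.choose 4 : ℂ))
            * ∑ k ∈ Finset.Icc 1 (n - 1), ((1 - ζ ^ k)⁻¹) ^ 2
        + (-(n : ℂ) + (n.choose 2 : ℂ) - (n.choose 3 : ℂ) + (n.choose 4 : ℂ) - (n.choose 5 : ℂ))
            * ∑ k ∈ Finset.Icc 1 (n - 1), (1 - ζ ^ k)⁻¹ := by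
    rw [← orth n hn ζ hprim 5 (by omega),
      Finset.sum_congr rfl fun k hk => point5 n (ζ ^ k) (hxn k hk) (hx1 k hk)]
    simp only [Finset.sum_add_distrib, Finset.mul_sum]
  have c2 : ((n.choose 2 : ℕ) : ℂ) = (n : ℂ) * (n - 1) / 2 := by
    linear_combination (castC2 n) / 2
  have c3 : ((n.choose 3 : ℕ) : ℂ) = (n : ℂ) * (n - 1) * (n - 2) / 6 := by
    linear_combination (castC3 n) / 6
  have c4 : ((n.choose 4 : ℕ) : ℂ) = (n : ℂ) * (n - 1) * (n - 2) * (n - 3) / 24 := by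
    linear_combination (castC4 n) / 24
  have c5 : ((n.choose 5 : ℕ) : ℂ) = (n : ℂ) * (n - 1) * (n - 2) * (n - 3) * (n - 4) / 120 := by
    linear_combination (castC5 n) / 120
  have c6 : ((n.choose 6 : ℕ) : ℂ)
      = (n : ℂ) * (n - 1) * (n - 2) * (n - 3) * (n - 4) * (n - 5) / 720 := by
    linear_combination (castC6 n) / 720
  rw [c2] at E1
  rw [c2, c3] at E2
  rw [c2, c3, c4] at E3
  rw [c2, c3, c4, c5] at E4
  rw [c2, c3, c4, c5, c6] at E5
  have hS1 : ∑ k ∈ Finset.Icc 1 (n - 1), (1 - ζ ^ k)⁻¹ = ((n : ℂ) - 1) / 2 := by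
    apply mul_left_cancel₀ hn0
    linear_combination E1
  have hS2 : ∑ k ∈ Finset.Icc 1 (n - 1), ((1 - ζ ^ k)⁻¹) ^ 2
      = ((n : ℂ) - 1) * (5 - n) / 12 := by
    apply mul_left_cancel₀ hn0
    linear_combination E2 + ((n : ℂ) - (n : ℂ) * (n - 1) / 2) * hS1
  have hS3 : ∑ k ∈ Finset.Icc 1 (n - 1), ((1 - ζ ^ k)⁻¹) ^ 3
      = -((n : ℂ) - 1) * ((n : ℂ) - 3) / 8 := by
    apply mul_left_cancel₀ hn0
    linear_combination E3 + (2 * (n : ℂ) - (n : ℂ) * (n - 1) / 2) * hS2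
      + (-(n : ℂ) + (n : ℂ) * (n - 1) / 2 - (n : ℂ) * (n - 1) * (n - 2) / 6) * hS1
  have hS4 : ∑ k ∈ Finset.Icc 1 (n - 1), ((1 - ζ ^ k)⁻¹) ^ 4
      = ((n : ℂ) ^ 4 - 110 * n ^ 2 + 360 * n - 251) / 720 := by
    apply mul_left_cancel₀ hn0
    linear_combination E4 + (3 * (n : ℂ) - (n : ℂ) * (n - 1) / 2) * hS3
      + (-3 * (n : ℂ) + 2 * ((n : ℂ) * (n - 1) / 2) - (n : ℂ) * (n - 1) * (n - 2) / 6) * hS2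
      + ((n : ℂ) - (n : ℂ) * (n - 1) / 2 + (n : ℂ) * (n - 1) * (n - 2) / 6
          - (n : ℂ) * (n - 1) * (n - 2) * (n - 3) / 24) * hS1
  simp only [one_div, ← inv_pow]
  apply mul_left_cancel₀ hn0
  linear_combination E5 + (4 * (n : ℂ) - (n : ℂ) * (n - 1) / 2) * hS4
    + (-6 * (n : ℂ) + 3 * ((n : ℂ) * (n - 1) / 2) - (n : ℂ) * (n - 1) * (n - 2) / 6) * hS3
    + (4 * (n : ℂ) - 3 * ((n : ℂ) * (n - 1) / 2) + 2 * ((n : ℂ) * (n - 1) * (n - 2) / 6)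
        - (n : ℂ) * (n - 1) * (n - 2) * (n - 3) / 24) * hS2
    + (-(n : ℂ) + (n : ℂ) * (n - 1) / 2 - (n : ℂ) * (n - 1) * (n - 2) / 6
        + (n : ℂ) * (n - 1) * (n - 2) * (n - 3) / 24
        - (n : ℂ) * (n - 1) * (n - 2) * (n - 3) * (n - 4) / 120) * hS1
end

section
/- Let n ≥ 2, ζ = exp(2πi/n), and let m ≥ 1 with m ≤ n-1. Then the m-th elementary symmetric polynomial of the values 1/(1-ζ^k) for k = 1,…,n-1, i.e. the sum over 1 ≤ i₁ < i₂ < … < i_m ≤ n-1 of ∏_{r=1}^m 1/(1-ζ^{i_r}), equals (1/(m+1))·C(n-1, m). -/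
open Complex Finset

open Polynomial

theorem esymm_inv_one_sub_root_of_unity (n m : ℕ) (hn : 2 ≤ n)
    (hm : 1 ≤ m) (hmn : m ≤ n - 1)
    (ζ : ℂ) (hζ : ζ = Complex.exp (2 * Real.pi * Complex.I / n)) :
    ∑ s ∈ (Finset.Icc 1 (n - 1)).powersetCard m, ∏ k ∈ s, (1 / (1 - ζ ^ k)) =
      (1 / ((m : ℂ) + 1)) * (Nat.choose (n - 1) m : ℂ) := by
  have hn0 : 0 < n := by omega
  have : NeZero n := ⟨by omega⟩
  have hprim : IsPrimitiveRoot ζ n := by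
    rw [hζ]; exact Complex.isPrimitiveRoot_exp n (by omega)
  -- the n-th roots of unity are exactly ζ^i for i < n
  have himg : Polynomial.nthRootsFinset n (1 : ℂ) = (Finset.range n).image (ζ ^ ·) := by
    ext x
    rw [Polynomial.mem_nthRootsFinset hn0, Finset.mem_image]
    constructor
    · intro hx
      obtain ⟨i, hi, rfl⟩ := hprim.eq_pow_of_pow_eq_one hx
      exact ⟨i, Finset.mem_range.mpr hi, rfl⟩
    · rintro ⟨i, -, rfl⟩
      rw [← pow_mul, mul_comm, pow_mul, hprim.pow_eq_one, one_pow]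
  have hrange : ∏ i ∈ Finset.range n, (X - C (ζ ^ i)) = X ^ n - 1 := by
    rw [Polynomial.X_pow_sub_one_eq_prod hn0 hprim, himg,
      Finset.prod_image fun i hi j hj h =>
        hprim.pow_inj (Finset.mem_range.mp hi) (Finset.mem_range.mp hj) h]
  have hins : Finset.range n = insert 0 (Finset.Icc 1 (n - 1)) := by
    ext x; simp; omega
  have hgeom : ∏ i ∈ Finset.Icc 1 (n - 1), (X - C (ζ ^ i)) =
      ∑ j ∈ Finset.range n, (X : ℂ[X]) ^ j := by
    have h0 : (X - C (1 : ℂ)) ≠ 0 := Polynomial.X_sub_C_ne_zero 1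
    apply mul_left_cancel₀ h0
    have : (X - C (1 : ℂ)) * ∏ i ∈ Finset.Icc 1 (n - 1), (X - C (ζ ^ i)) =
        ∏ i ∈ Finset.range n, (X - C (ζ ^ i)) := by
      rw [hins, Finset.prod_insert (by simp), pow_zero]
    rw [this, hrange, Polynomial.C_1, mul_comm, geom_sum_mul]
  have heval : ∀ y : ℂ, ∏ i ∈ Finset.Icc 1 (n - 1), (y - ζ ^ i) =
      ∑ j ∈ Finset.range n, y ^ j := by
    intro y
    have h := congrArg (Polynomial.eval y) hgeom
    simpa [Polynomial.eval_prod] using h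
  have hcard : (Finset.Icc 1 (n - 1)).card = n - 1 := by
    rw [Nat.card_Icc]; omega
  have hprodn : ∏ k ∈ Finset.Icc 1 (n - 1), (1 - ζ ^ k) = (n : ℂ) := by
    have h := heval 1
    simpa using h
  have hne : ∀ k ∈ Finset.Icc 1 (n - 1), (1 : ℂ) - ζ ^ k ≠ 0 := by
    intro k hk
    rw [Finset.mem_Icc] at hk
    have := hprim.pow_ne_one_of_pos_of_lt (l := k) (by omega) (by omega)
    intro h
    exact this (by linear_combination -h)
  -- the key polynomial identity, proved by evaluating everywhere
  have hQ : ∏ k ∈ Finset.Icc 1 (n - 1), ((X + 1) - C (ζ ^ k) * X) =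
      ∑ j ∈ Finset.range n, ((X : ℂ[X]) + 1) ^ j * X ^ (n - 1 - j) := by
    apply Polynomial.funext
    intro x
    simp only [Polynomial.eval_prod, Polynomial.eval_finset_sum, Polynomial.eval_mul,
      Polynomial.eval_add, Polynomial.eval_sub, Polynomial.eval_pow, Polynomial.eval_X,
      Polynomial.eval_one, Polynomial.eval_C]
    rcases eq_or_ne x 0 with rfl | hx
    · rw [Finset.sum_eq_single (n - 1)]
      · simp
      · intro j hj hjne
        rw [Finset.mem_range] at hj
        rw [zero_pow (by omega)]
        ring
      · intro h; exact absurd (Finset.mem_range.mpr (by omega)) h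
    · calc ∏ i ∈ Finset.Icc 1 (n - 1), (x + 1 - ζ ^ i * x)
          = ∏ i ∈ Finset.Icc 1 (n - 1), x * ((x + 1) / x - ζ ^ i) := by
            refine Finset.prod_congr rfl fun i _ => ?_
            field_simp
        _ = (∏ _i ∈ Finset.Icc 1 (n - 1), x) *
              ∏ i ∈ Finset.Icc 1 (n - 1), ((x + 1) / x - ζ ^ i) := by
            rw [Finset.prod_mul_distrib]
        _ = x ^ (n - 1) * ∑ j ∈ Finset.range n, ((x + 1) / x) ^ j := by
            rw [Finset.prod_const, hcard, heval]
        _ = ∑ j ∈ Finset.range n, x ^ (n - 1) * ((x + 1) / x) ^ j := by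
            rw [Finset.mul_sum]
        _ = ∑ j ∈ Finset.range n, (x + 1) ^ j * x ^ (n - 1 - j) := by
            refine Finset.sum_congr rfl fun j hj => ?_
            rw [Finset.mem_range] at hj
            rw [div_pow, pow_sub₀ x hx (show j ≤ n - 1 by omega)]
            ring
  have hP : Polynomial.C (n : ℂ) *
        ∏ k ∈ Finset.Icc 1 (n - 1), (X + C (1 / (1 - ζ ^ k))) =
      ∑ j ∈ Finset.range n, ((X : ℂ[X]) + 1) ^ j * X ^ (n - 1 - j) := by
    rw [← hQ, ← hprodn, map_prod, ← Finset.prod_mul_distrib]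
    refine Finset.prod_congr rfl fun k hk => ?_
    have h := hne k hk
    rw [mul_add, ← Polynomial.C_mul, mul_one_div_cancel h, map_sub, map_one]
    ring
  -- take coefficients at degree n - 1 - m
  have hcoeff := congrArg (fun p => Polynomial.coeff p (n - 1 - m)) hP
  simp only [Polynomial.coeff_C_mul] at hcoeff
  rw [Finset.prod_X_add_C_coeff _ _ (by omega), hcard] at hcoeff
  have hmm : n - 1 - (n - 1 - m) = m := by omega
  rw [hmm] at hcoeff
  have hsum : ∑ j ∈ Finset.range n,
      (((X : ℂ[X]) + 1) ^ j * X ^ (n - 1 - j)).coeff (n - 1 - m) =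
      (Nat.choose n (m + 1) : ℂ) := by
    have hterm : ∀ j ∈ Finset.range n,
        (((X : ℂ[X]) + 1) ^ j * X ^ (n - 1 - j)).coeff (n - 1 - m)
          = if m ≤ j then (Nat.choose j m : ℂ) else 0 := by
      intro j hj
      rw [Finset.mem_range] at hj
      rw [Polynomial.coeff_mul_X_pow']
      by_cases h : m ≤ j
      · rw [if_pos (by omega), if_pos h]
        have e : n - 1 - m - (n - 1 - j) = j - m := by omega
        rw [e, Polynomial.coeff_X_add_one_pow, Nat.choose_symm h]
      · rw [if_neg (by omega), if_neg h]
    rw [Finset.sum_congr rfl hterm, Finset.sum_ite, Finset.sum_const_zero, add_zero]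
    have hfil : (Finset.range n).filter (fun j => m ≤ j) = Finset.Icc m (n - 1) := by
      ext x; simp; omega
    rw [hfil, ← Nat.cast_sum, Nat.sum_Icc_choose]
    congr 2
    omega
  rw [Polynomial.finset_sum_coeff, hsum] at hcoeff
  -- finish with arithmetic
  have hnat : n * Nat.choose (n - 1) m = Nat.choose n (m + 1) * (m + 1) := by
    have := Nat.add_one_mul_choose_eq (n - 1) m
    have hn1 : n - 1 + 1 = n := by omega
    rw [hn1] at this
    exact this
  have hn' : (n : ℂ) ≠ 0 := Nat.cast_ne_zero.mpr (by omega)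
  have hm1 : ((m : ℂ) + 1) ≠ 0 := by
    have h : ((m + 1 : ℕ) : ℂ) ≠ 0 := Nat.cast_ne_zero.mpr (Nat.succ_ne_zero m)
    push_cast at h
    exact h
  have hc : (n : ℂ) * ((n - 1).choose m : ℂ) = (n.choose (m + 1) : ℂ) * ((m : ℂ) + 1) := by
    have h := congrArg (fun k : ℕ => (k : ℂ)) hnat
    push_cast at h
    exact h
  have hsol : ∑ s ∈ (Finset.Icc 1 (n - 1)).powersetCard m, ∏ k ∈ s, (1 / (1 - ζ ^ k)) =
      (n.choose (m + 1) : ℂ) / n := by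
    rw [eq_div_iff hn', mul_comm]
    exact hcoeff
  rw [hsol]
  field_simp
  linear_combination -hc
end

section
/- Let n ≥ 2, ζ = exp(2πi/n), and s₁,…,s_m positive integers. Then the imaginary part of 𝔷_n(ζ;s₁,…,s_m) + 𝔷_n(ζ;s_m,…,s₁) is zero, where 𝔷_n(ζ;s₁,…,s_m) = Σ_{1≤i₁<…<i_m≤n-1} ∏_{r=1}^m (1-ζ^{i_r})^{-s_r}. -/
open Complex Finset
open scoped Classical

theorem im_qmzv_add_rev_eq_zero (n m : ℕ) (hn : 2 ≤ n)
    (ζ : ℂ) (hζ : ζ = Complex.exp (2 * Real.pi * Complex.I / n))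
    (s : Fin m → ℕ) (hs : ∀ r, 1 ≤ s r) :
    ((∑ i ∈ (Fintype.piFinset fun _ : Fin m => Finset.Icc 1 (n - 1)).filter
          (fun i => StrictMono i),
        ∏ r, ((1 - ζ ^ (i r)) ^ (s r))⁻¹) +
      ∑ i ∈ (Fintype.piFinset fun _ : Fin m => Finset.Icc 1 (n - 1)).filter
          (fun i => StrictMono i),
        ∏ r, ((1 - ζ ^ (i r)) ^ (s r.rev))⁻¹).im = 0 := by
  have hn0 : (n : ℂ) ≠ 0 := Nat.cast_ne_zero.mpr (by omega)
  have hζn : ζ ^ n = 1 := by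
    rw [hζ, ← Complex.exp_nat_mul]
    have : (n : ℂ) * (2 * Real.pi * Complex.I / n) = 2 * Real.pi * Complex.I := by
      field_simp
    rw [this, Complex.exp_two_pi_mul_I]
  have hconj : (starRingEnd ℂ) ζ = ζ⁻¹ := by
    rw [hζ, ← Complex.exp_conj, ← Complex.exp_neg]
    congr 1
    simp only [map_div₀, map_mul, map_ofNat, Complex.conj_I, Complex.conj_ofReal,
      Complex.conj_natCast]
    ring
  have key : ∀ k, 1 ≤ k → k ≤ n - 1 → (starRingEnd ℂ) (ζ ^ k) = ζ ^ (n - k) := by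
    intro k hk1 hk2
    have hkn : k ≤ n := by omega
    have h1 : ζ ^ (n - k) * ζ ^ k = 1 := by
      rw [← pow_add, Nat.sub_add_cancel hkn, hζn]
    rw [map_pow, hconj, inv_pow]
    exact inv_eq_of_mul_eq_one_left h1
  set S := (Fintype.piFinset fun _ : Fin m => Finset.Icc 1 (n - 1)).filter
      (fun i => StrictMono i) with hS
  have hmemS : ∀ i ∈ S, ∀ r, 1 ≤ i r ∧ i r ≤ n - 1 := by
    intro i hi r
    rw [hS, Finset.mem_filter, Fintype.mem_piFinset] at hi
    have := hi.1 r
    rw [Finset.mem_Icc] at this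
    exact this
  have hrev : (∑ i ∈ S, ∏ r, ((1 - ζ ^ (i r)) ^ (s r.rev))⁻¹)
      = (starRingEnd ℂ) (∑ i ∈ S, ∏ r, ((1 - ζ ^ (i r)) ^ (s r))⁻¹) := by
    rw [map_sum]
    refine Finset.sum_nbij' (fun i r => n - i r.rev)
      (fun i r => n - i r.rev) ?_ ?_ ?_ ?_ ?_
    · intro a ha
      rw [hS, Finset.mem_filter, Fintype.mem_piFinset]
      constructor
      · intro r
        have := hmemS a ha r.rev
        simp only [Finset.mem_Icc]
        omega
      · intro x y hxy
        have h1 := hmemS a ha x.rev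
        have h2 := hmemS a ha y.rev
        have hlt : a y.rev < a x.rev := by
          have := (Finset.mem_filter.mp ha).2
          exact this (Fin.rev_lt_rev.mpr hxy)
        simp only []
        omega
    · intro a ha
      rw [hS, Finset.mem_filter, Fintype.mem_piFinset]
      constructor
      · intro r
        have := hmemS a ha r.rev
        simp only [Finset.mem_Icc]
        omega
      · intro x y hxy
        have h1 := hmemS a ha x.rev
        have h2 := hmemS a ha y.rev
        have hlt : a y.rev < a x.rev := by
          have := (Finset.mem_filter.mp ha).2
          exact this (Fin.rev_lt_rev.mpr hxy)
        simp only []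
        omega
    · intro a ha
      funext r
      simp only [Fin.rev_rev]
      have := hmemS a ha r
      omega
    · intro a ha
      funext r
      simp only [Fin.rev_rev]
      have := hmemS a ha r
      omega
    · intro a ha
      rw [map_prod]
      refine Fintype.prod_equiv Fin.revPerm _ _ (fun x => ?_)
      have h := hmemS a ha x
      simp only [Fin.revPerm_apply, Fin.rev_rev]
      rw [map_inv₀, map_pow, map_sub, map_one, key (n - a x) (by omega) (by omega),
        Nat.sub_sub_self (by omega : a x ≤ n)]
  rw [hrev, Complex.add_conj, Complex.ofReal_im]
end

section
/- Let n ≥ 3, ζ = exp(2πi/n), u_k = 1/(1-ζ^k). Then the real part of Σ_{1≤i₁<…<i_{n-2}≤n-1} u_{i₁}⋯u_{i_{n-3}}·u_{i_{n-2}}² equals (n-1)/(2n). -/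
open Complex Finset
open scoped Classical

private def ee (n j : ℕ) : Fin (n - 2) → ℕ :=
  fun r => if (r : ℕ) + 1 < j then (r : ℕ) + 1 else (r : ℕ) + 2

private lemma ee_strictMono (n j : ℕ) : StrictMono (ee n j) := by
  intro a b hab
  have h : (a : ℕ) < (b : ℕ) := hab
  simp only [ee]
  split_ifs <;> omega

private lemma smono_add_le {m : ℕ} {f : Fin m → ℕ} (hf : StrictMono f) :
    ∀ k : ℕ, ∀ r s : Fin m, (s : ℕ) = (r : ℕ) + k → f r + k ≤ f s := by
  intro k
  induction k with
  | zero =>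
    intro r s h
    have : r = s := Fin.ext (by omega)
    subst this; simp
  | succ k ih =>
    intro r s h
    have hrk : (r : ℕ) + k < m := by have := s.isLt; omega
    have h1 := ih r ⟨(r : ℕ) + k, hrk⟩ rfl
    have h2 : f ⟨(r : ℕ) + k, hrk⟩ < f s := by
      apply hf
      show ((⟨(r : ℕ) + k, hrk⟩ : Fin m) : ℕ) < (s : ℕ)
      simp; omega
    omega

private lemma re_inv_one_sub {w : ℂ} (h1 : Complex.normSq w = 1) (h2 : w ≠ 1) :
    ((1 - w)⁻¹).re = 1 / 2 := by
  have hsq : w.re * w.re + w.im * w.im = 1 := by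
    rw [← Complex.normSq_apply, h1]
  have hre : w.re ≠ 1 := by
    intro h
    apply h2
    have him : w.im = 0 := by nlinarith
    exact Complex.ext h him
  rw [Complex.inv_re]
  have hns : Complex.normSq (1 - w) = 2 * (1 - w.re) := by
    simp only [Complex.normSq_apply, Complex.sub_re, Complex.sub_im, Complex.one_re,
      Complex.one_im]
    nlinarith
  rw [hns]
  simp only [Complex.sub_re, Complex.one_re]
  have : (1 : ℝ) - w.re ≠ 0 := by intro h; apply hre; linarith
  field_simp


private lemma ee_val_mem {n : ℕ} (hn : 3 ≤ n) {j : ℕ} (hj1 : 1 ≤ j) (hj2 : j ≤ n - 1)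
    (r : Fin (n - 2)) : ee n j r ∈ Finset.Icc 1 (n - 1) := by
  have hr := r.isLt
  simp only [ee, Finset.mem_Icc]
  split_ifs <;> omega

private lemma ee_inj {n : ℕ} (hn : 3 ≤ n) : ∀ j ∈ Finset.Icc 1 (n - 1),
    ∀ j' ∈ Finset.Icc 1 (n - 1), ee n j = ee n j' → j = j' := by
  have key : ∀ j j' : ℕ, 1 ≤ j → j' ≤ n - 1 → j < j' → ee n j ≠ ee n j' := by
    intro j j' h1 h2 hlt heq
    have hjm : j - 1 < n - 2 := by omega
    have hc := congrFun heq ⟨j - 1, hjm⟩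
    simp only [ee, Fin.val_mk] at hc
    rw [if_neg (by omega), if_pos (by omega)] at hc
    omega
  intro j hj j' hj'
  simp only [Finset.mem_Icc] at hj hj'
  intro heq
  rcases lt_trichotomy j j' with h | h | h
  · exact absurd heq (key j j' hj.1 hj'.2 h)
  · exact h
  · exact absurd heq.symm (key j' j hj'.1 hj.2 h)

private lemma ee_surj {n : ℕ} (hn : 3 ≤ n) {f : Fin (n - 2) → ℕ}
    (hmem : ∀ r, f r ∈ Finset.Icc 1 (n - 1)) (hsm : StrictMono f) :
    ∃ j, (j ∈ Finset.Icc 1 (n - 1)) ∧ ee n j = f := by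
  have hm2 : 0 < n - 2 := by omega
  have hlow : ∀ r : Fin (n - 2), (r : ℕ) + 1 ≤ f r := by
    intro r
    have h0 : 1 ≤ f ⟨0, hm2⟩ := (Finset.mem_Icc.1 (hmem _)).1
    have := smono_add_le hsm (r : ℕ) ⟨0, hm2⟩ r (by simp)
    omega
  have hhigh : ∀ r : Fin (n - 2), f r ≤ (r : ℕ) + 2 := by
    intro r
    have hr := r.isLt
    have hl : n - 3 < n - 2 := by omega
    have hle : f ⟨n - 3, hl⟩ ≤ n - 1 := (Finset.mem_Icc.1 (hmem _)).2
    have := smono_add_le hsm ((n - 3) - (r : ℕ)) r ⟨n - 3, hl⟩ (by simp only [Fin.val_mk]; omega)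
    omega
  by_cases hall : ∀ r : Fin (n - 2), f r = (r : ℕ) + 1
  · refine ⟨n - 1, by simp only [Finset.mem_Icc]; omega, ?_⟩
    funext r
    have hr := r.isLt
    simp only [ee]
    rw [if_pos (by omega)]
    exact (hall r).symm
  · push_neg at hall
    obtain ⟨r0, hr0⟩ := hall
    have hex : ∃ k : ℕ, ∃ h : k < n - 2, f ⟨k, h⟩ = k + 2 := by
      refine ⟨(r0 : ℕ), r0.isLt, ?_⟩
      rw [Fin.eta]
      have h1 := hlow r0
      have h2 := hhigh r0
      omega
    obtain ⟨htlt, htval⟩ := Nat.find_spec hex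
    set t := Nat.find hex with ht
    refine ⟨t + 1, by simp only [Finset.mem_Icc]; omega, ?_⟩
    funext r
    have hr := r.isLt
    by_cases hcase : (r : ℕ) < t
    · have hne2 : f r ≠ (r : ℕ) + 2 := by
        intro h2
        exact Nat.find_min hex hcase ⟨r.isLt, by rw [Fin.eta]; exact h2⟩
      have h1 := hlow r
      have h2 := hhigh r
      simp only [ee]
      rw [if_pos (by omega)]
      omega
    · have hstep := smono_add_le hsm ((r : ℕ) - t) ⟨t, htlt⟩ r (by simp only [Fin.val_mk]; omega)
      have h2 := hhigh r
      simp only [ee]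
      rw [if_neg (by omega)]
      have hfin : f ⟨t, htlt⟩ + ((r : ℕ) - t) ≤ f r := hstep
      have hval : f ⟨t, htlt⟩ = t + 2 := htval
      omega

theorem re_qmzv_depth_sub_two (n : ℕ) (hn : 3 ≤ n)
    (ζ : ℂ) (hζ : ζ = Complex.exp (2 * Real.pi * Complex.I / n))
    (u : ℕ → ℂ) (hu : ∀ k, u k = 1 / (1 - ζ ^ k)) :
    (∑ i ∈ (Fintype.piFinset fun _ : Fin (n - 2) => Finset.Icc 1 (n - 1)).filter
          (fun i => StrictMono i),
        ∏ r, u (i r) ^ (if (r : ℕ) = n - 3 then 2 else 1)).re =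
      ((n : ℝ) - 1) / (2 * n) := by
  classical
  have hn0 : n ≠ 0 := by omega
  have hprim : IsPrimitiveRoot ζ n := hζ ▸ Complex.isPrimitiveRoot_exp n hn0
  have hζn : ζ ^ n = 1 := hprim.pow_eq_one
  have hζ1 : ζ ≠ 1 := by
    intro h
    have := hprim.pow_ne_one_of_pos_of_lt (l := 1) one_ne_zero (by omega)
    simp [h] at this
  have hpow_ne : ∀ k, 1 ≤ k → k ≤ n - 1 → ζ ^ k ≠ 1 := fun k h1 h2 =>
    hprim.pow_ne_one_of_pos_of_lt (by omega) (by omega)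
  have hsub_ne : ∀ k, 1 ≤ k → k ≤ n - 1 → (1 : ℂ) - ζ ^ k ≠ 0 := by
    intro k h1 h2 h
    exact hpow_ne k h1 h2 (by rw [sub_eq_zero] at h; exact h.symm)
  -- product of (1 - ζ^k)
  have hP : ∏ k ∈ Finset.Icc 1 (n - 1), (1 - ζ ^ k) = (n : ℂ) := by
    obtain ⟨n', rfl⟩ : ∃ n', n = n' + 1 := ⟨n - 1, by omega⟩
    have h := hprim.prod_one_sub_pow_eq_order
    push_cast
    rw [← h]
    have : Finset.Icc 1 n' = Finset.Ico 1 (n' + 1) := by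
      ext x; simp [Finset.mem_Icc, Finset.mem_Ico]
    rw [this, Finset.prod_Ico_eq_prod_range]
    simp only [Nat.add_sub_cancel]
    exact Finset.prod_congr rfl fun k _ => by rw [add_comm]
  have hPu : ∏ k ∈ Finset.Icc 1 (n - 1), u k = (n : ℂ)⁻¹ := by
    have : ∀ k ∈ Finset.Icc 1 (n - 1), u k = (1 - ζ ^ k)⁻¹ := by
      intro k _; rw [hu, one_div]
    rw [Finset.prod_congr rfl this, Finset.prod_inv_distrib, hP]
  -- the bijection
  have hbij :
      (∑ i ∈ (Fintype.piFinset fun _ : Fin (n - 2) => Finset.Icc 1 (n - 1)).filter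
          (fun i => StrictMono i),
        ∏ r, u (i r) ^ (if (r : ℕ) = n - 3 then 2 else 1))
      = ∑ j ∈ Finset.Icc 1 (n - 1),
          ∏ r : Fin (n - 2), u (ee n j r) ^ (if (r : ℕ) = n - 3 then 2 else 1) := by
    refine (Finset.sum_bij (fun j _ => ee n j) ?_ ?_ ?_ ?_).symm
    · intro j hj
      have hj' := Finset.mem_Icc.1 hj
      exact Finset.mem_filter.2 ⟨Fintype.mem_piFinset.2 fun r => ee_val_mem hn hj'.1 hj'.2 r,
        ee_strictMono n j⟩
    · intro j hj j' hj' h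
      exact ee_inj hn j hj j' hj' h
    · intro f hf
      rw [Finset.mem_filter] at hf
      obtain ⟨j, hj, hje⟩ := ee_surj hn (fun r => Fintype.mem_piFinset.1 hf.1 r) hf.2
      exact ⟨j, hj, hje⟩
    · intro j hj
      rfl
  rw [hbij]
  -- evaluate each term
  have hterm : ∀ j ∈ Finset.Icc 1 (n - 1),
      (∏ r : Fin (n - 2), u (ee n j r) ^ (if (r : ℕ) = n - 3 then 2 else 1))
        = (n : ℂ)⁻¹ * (1 - ζ ^ j) * u (if n - 2 < j then n - 2 else n - 1) := by
    intro j hj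
    obtain ⟨hj1, hj2⟩ := Finset.mem_Icc.1 hj
    have hrl : n - 3 < n - 2 := by omega
    have hrlval : ((⟨n - 3, hrl⟩ : Fin (n - 2)) : ℕ) = n - 3 := rfl
    have hstep : ∀ r : Fin (n - 2),
        u (ee n j r) ^ (if (r : ℕ) = n - 3 then 2 else 1)
          = u (ee n j r) * (if r = ⟨n - 3, hrl⟩ then u (ee n j r) else 1) := by
      intro r
      have hiff : ((r : ℕ) = n - 3) ↔ (r = ⟨n - 3, hrl⟩) :=
        ⟨fun h => Fin.ext h, fun h => by rw [h]⟩
      by_cases h : (r : ℕ) = n - 3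
      · rw [if_pos h, if_pos (hiff.1 h)]; ring
      · rw [if_neg h, if_neg (fun hh => h (hiff.2 hh))]; ring
    rw [Finset.prod_congr rfl fun r _ => hstep r, Finset.prod_mul_distrib]
    have h2 : (∏ r : Fin (n - 2), if r = ⟨n - 3, hrl⟩ then u (ee n j r) else 1)
        = u (ee n j ⟨n - 3, hrl⟩) := by
      rw [Finset.prod_ite_eq' Finset.univ (⟨n - 3, hrl⟩ : Fin (n - 2)) (fun r => u (ee n j r))]
      simp
    have himg : Finset.image (ee n j) Finset.univ = (Finset.Icc 1 (n - 1)).erase j := by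
      apply Finset.eq_of_subset_of_card_le
      · intro x hx
        obtain ⟨r, _, rfl⟩ := Finset.mem_image.1 hx
        refine Finset.mem_erase.2 ⟨?_, ee_val_mem hn hj1 hj2 r⟩
        have hr := r.isLt
        simp only [ee]
        split_ifs <;> omega
      · rw [Finset.card_erase_of_mem hj, Nat.card_Icc,
          Finset.card_image_of_injective _ (ee_strictMono n j).injective]
        simp only [Finset.card_univ, Fintype.card_fin]
        omega
    have h1 : (∏ r : Fin (n - 2), u (ee n j r)) = ∏ k ∈ (Finset.Icc 1 (n - 1)).erase j, u k := by
      rw [← himg, Finset.prod_image]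
      intro a _ b _ h
      exact (ee_strictMono n j).injective h
    have herase : ∏ k ∈ (Finset.Icc 1 (n - 1)).erase j, u k = (n : ℂ)⁻¹ * (1 - ζ ^ j) := by
      have hmul := Finset.mul_prod_erase (Finset.Icc 1 (n - 1)) u hj
      rw [hPu] at hmul
      have hone : (1 - ζ ^ j) * u j = 1 := by
        rw [hu, mul_one_div, div_self (hsub_ne j hj1 hj2)]
      calc ∏ k ∈ (Finset.Icc 1 (n - 1)).erase j, u k
          = ((1 - ζ ^ j) * u j) * ∏ k ∈ (Finset.Icc 1 (n - 1)).erase j, u k := by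
            rw [hone, one_mul]
        _ = (1 - ζ ^ j) * (u j * ∏ k ∈ (Finset.Icc 1 (n - 1)).erase j, u k) := by ring
        _ = (1 - ζ ^ j) * (n : ℂ)⁻¹ := by rw [hmul]
        _ = (n : ℂ)⁻¹ * (1 - ζ ^ j) := by ring
    have hlast : ee n j ⟨n - 3, hrl⟩ = if n - 2 < j then n - 2 else n - 1 := by
      simp only [ee, hrlval]
      split_ifs <;> omega
    rw [h1, h2, herase, hlast]
  rw [Finset.sum_congr rfl hterm]
  -- split off j = n - 1
  have hnotmem : (n - 1) ∉ Finset.Icc 1 (n - 2) := by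
    simp only [Finset.mem_Icc]; omega
  have hsplit : Finset.Icc 1 (n - 1) = insert (n - 1) (Finset.Icc 1 (n - 2)) := by
    ext x; simp only [Finset.mem_Icc, Finset.mem_insert]; omega
  rw [hsplit, Finset.sum_insert hnotmem, if_pos (show n - 2 < n - 1 by omega)]
  have hcong : ∀ j ∈ Finset.Icc 1 (n - 2),
      (n : ℂ)⁻¹ * (1 - ζ ^ j) * u (if n - 2 < j then n - 2 else n - 1)
        = (n : ℂ)⁻¹ * u (n - 1) * (1 - ζ ^ j) := by
    intro j hj
    obtain ⟨h1, h2⟩ := Finset.mem_Icc.1 hj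
    rw [if_neg (by omega)]
    ring
  rw [Finset.sum_congr rfl hcong, ← Finset.mul_sum]
  -- geometric sum
  have hgeom : ∑ k ∈ Finset.range n, ζ ^ k = 0 := by
    rw [geom_sum_eq hζ1 n, hζn, sub_self, zero_div]
  have hsum1 : ∑ j ∈ Finset.Icc 1 (n - 2), (1 - ζ ^ j) = ((n : ℂ) - 1) + ζ ^ (n - 1) := by
    have hr : Finset.range n = insert 0 (insert (n - 1) (Finset.Icc 1 (n - 2))) := by
      ext x; simp only [Finset.mem_range, Finset.mem_insert, Finset.mem_Icc]; omega
    have h0 : (0 : ℕ) ∉ insert (n - 1) (Finset.Icc 1 (n - 2)) := by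
      simp only [Finset.mem_insert, Finset.mem_Icc]; omega
    rw [hr, Finset.sum_insert h0, Finset.sum_insert hnotmem, pow_zero] at hgeom
    have hzsum : ∑ j ∈ Finset.Icc 1 (n - 2), ζ ^ j = -1 - ζ ^ (n - 1) := by
      linear_combination hgeom
    rw [Finset.sum_sub_distrib, hzsum, Finset.sum_const, Nat.card_Icc, nsmul_eq_mul, mul_one]
    rw [show n - 2 + 1 - 1 = n - 2 from by omega, Nat.cast_sub (show 2 ≤ n by omega)]
    push_cast
    ring
  rw [hsum1]
  -- final algebra
  have hnC : (n : ℂ) ≠ 0 := Nat.cast_ne_zero.2 hn0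
  have hwn : ζ ^ (n - 1) ≠ 1 := hpow_ne (n - 1) (by omega) le_rfl
  have h1w : (1 : ℂ) - ζ ^ (n - 1) ≠ 0 := hsub_ne (n - 1) (by omega) le_rfl
  have hww : ζ ^ (n - 1) * ζ ^ (n - 1) = ζ ^ (n - 2) := by
    rw [← pow_add, show (n - 1) + (n - 1) = (n - 2) + n from by omega, pow_add, hζn, mul_one]
  have h2w : (1 : ℂ) - ζ ^ (n - 1) * ζ ^ (n - 1) ≠ 0 := by
    rw [hww]; exact hsub_ne (n - 2) (by omega) (by omega)
  have hwm1 : ζ ^ (n - 1) ≠ -1 := by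
    intro h
    have h2 : ζ ^ ((n - 1) * 2) = 1 := by rw [pow_mul, h]; norm_num
    have hdvd : n ∣ (n - 1) * 2 := hprim.dvd_of_pow_eq_one _ h2
    have ha : n ∣ n * 2 := Dvd.intro 2 rfl
    have hd2 := Nat.dvd_sub ha hdvd
    rw [show n * 2 - (n - 1) * 2 = 2 from by omega] at hd2
    have := Nat.le_of_dvd (by norm_num) hd2
    omega
  have h1pw : (1 : ℂ) + ζ ^ (n - 1) ≠ 0 := by
    intro h; exact hwm1 (by linear_combination h)
  have hnormsq : Complex.normSq (ζ ^ (n - 1)) = 1 := by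
    have hwpow : (ζ ^ (n - 1)) ^ n = 1 := by
      rw [← pow_mul, mul_comm, pow_mul, hζn, one_pow]
    have habsp : ‖ζ ^ (n - 1)‖ ^ n = 1 := by rw [← norm_pow, hwpow, norm_one]
    have habs : ‖ζ ^ (n - 1)‖ = 1 := by
      by_contra hne
      rcases lt_or_gt_of_ne hne with h | h
      · have := pow_lt_one₀ (norm_nonneg _) h hn0
        rw [habsp] at this; exact lt_irrefl 1 this
      · have := one_lt_pow₀ h hn0
        rw [habsp] at this; exact lt_irrefl 1 this
    rw [← Complex.sq_norm, habs, one_pow]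
  have hra : ((1 - ζ ^ (n - 1))⁻¹).re = 1 / 2 := re_inv_one_sub hnormsq hwn
  have hrb : ((1 + ζ ^ (n - 1))⁻¹).re = 1 / 2 := by
    have hns : Complex.normSq (-(ζ ^ (n - 1))) = 1 := by
      rw [Complex.normSq_neg, hnormsq]
    have hne1 : -(ζ ^ (n - 1)) ≠ 1 := by
      intro h; exact hwm1 (by linear_combination -h)
    have := re_inv_one_sub hns hne1
    rw [sub_neg_eq_add] at this
    exact this
  have hexpr : (n : ℂ)⁻¹ * (1 - ζ ^ (n - 1)) * u (n - 2)
        + (n : ℂ)⁻¹ * u (n - 1) * ((n : ℂ) - 1 + ζ ^ (n - 1))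
      = (n : ℂ)⁻¹ * ((n : ℂ) * (1 - ζ ^ (n - 1))⁻¹ - 1 + (1 + ζ ^ (n - 1))⁻¹) := by
    rw [hu (n - 2), hu (n - 1), ← hww]
    rw [show (1:ℂ) - ζ ^ (n - 1) * ζ ^ (n - 1) = (1 - ζ ^ (n - 1)) * (1 + ζ ^ (n - 1)) by ring]
    field_simp
    ring
  rw [hexpr]
  have hcast : (n : ℂ)⁻¹ = ((((n : ℝ))⁻¹ : ℝ) : ℂ) := by
    push_cast
    rfl
  rw [hcast, Complex.re_ofReal_mul]
  simp only [Complex.add_re, Complex.sub_re, Complex.mul_re, Complex.natCast_re,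
    Complex.natCast_im, Complex.one_re, hra, hrb]
  have hnR : (n : ℝ) ≠ 0 := Nat.cast_ne_zero.2 hn0
  field_simp
  ring
end

section
/- Let n ≥ 2 and ζ = exp(2πi/n). Then Σ_{1≤i<j≤n-1} [(1-ζ^i)^{-2}(1-ζ^j)^{-3} + (1-ζ^i)^{-3}(1-ζ^j)^{-2}] = (n-1)(n-2)(n-5)(n-7)/144. -/
open Complex Finset Polynomial

private lemma qmzv_geom_poly (n : ℕ) (hn : 2 ≤ n) (ζ : ℂ) (hprim : IsPrimitiveRoot ζ n) :
    ∏ i ∈ Finset.Icc 1 (n-1), (X - C (ζ ^ i)) = ∑ k ∈ range n, (X:ℂ[X]) ^ k := by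
  have hn0 : n ≠ 0 := by omega
  have h1 : (X:ℂ[X])^n - C 1 = ∏ i ∈ range n, (X - C (ζ ^ i)) := by
    have hmon := Polynomial.monic_X_pow_sub_C (1:ℂ) hn0
    have hsp : Splits ((X:ℂ[X])^n - C 1) := IsAlgClosed.splits _
    have h := hsp.eq_prod_roots_of_monic hmon
    have hroots : ((X:ℂ[X])^n - C 1).roots = (Multiset.range n).map (fun i => ζ ^ i * 1) := by
      rw [← Polynomial.nthRoots]
      exact hprim.nthRoots_eq (one_pow n)
    rw [h, hroots, Multiset.map_map]
    rw [Finset.prod_eq_multiset_prod]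
    simp [Finset.range_val]
  have h2 : range n = insert 0 (Finset.Icc 1 (n-1)) := by
    ext x; simp only [Finset.mem_range, Finset.mem_insert, Finset.mem_Icc]; omega
  rw [h2, Finset.prod_insert (by simp)] at h1
  simp only [pow_zero, map_one] at h1
  have h3 : (∑ k ∈ range n, (X:ℂ[X]) ^ k) * (X - 1) = (X:ℂ[X])^n - 1 := geom_sum_mul X n
  have hX1 : (X:ℂ[X]) - 1 ≠ 0 := by
    have := Polynomial.X_sub_C_ne_zero (1:ℂ)
    simpa using this
  apply mul_left_cancel₀ hX1
  calc ((X:ℂ[X]) - 1) * ∏ i ∈ Finset.Icc 1 (n-1), (X - C (ζ ^ i))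
      = (X:ℂ[X])^n - 1 := by rw [h1]
    _ = ((X:ℂ[X]) - 1) * ∑ k ∈ range n, (X:ℂ[X]) ^ k := by rw [← h3]; ring

private lemma qmzv_key_poly (n : ℕ) (hn : 2 ≤ n) (ζ : ℂ)
    (hgeom : ∀ x : ℂ, ∏ i ∈ Finset.Icc 1 (n-1), (x - ζ ^ i) = ∑ k ∈ range n, x ^ k)
    (hne : ∀ i ∈ Finset.Icc 1 (n-1), 1 - ζ ^ i ≠ 0)
    (hprodn : ∏ i ∈ Finset.Icc 1 (n-1), (1 - ζ ^ i) = (n:ℂ)) :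
    C (n:ℂ) * ∏ i ∈ Finset.Icc 1 (n-1), (X + C ((1 - ζ ^ i)⁻¹)) = (1+X)^n - X^n := by
  apply Polynomial.eq_of_infinite_eval_eq
  apply Set.Infinite.mono (s := {(0:ℂ)}ᶜ)
  swap
  · exact Set.Finite.infinite_compl (Set.finite_singleton 0)
  intro x hx0
  simp only [Set.mem_compl_iff, Set.mem_singleton_iff] at hx0
  simp only [Set.mem_setOf_eq, eval_mul, eval_C, eval_prod, eval_add, eval_X, eval_sub, eval_pow,
    eval_one]
  have hcard : (Finset.Icc 1 (n-1)).card = n - 1 := by rw [Nat.card_Icc]; omega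
  have step1 : (n:ℂ) * ∏ i ∈ Finset.Icc 1 (n-1), (x + (1 - ζ ^ i)⁻¹)
      = ∏ i ∈ Finset.Icc 1 (n-1), (1 + x * (1 - ζ ^ i)) := by
    rw [← hprodn, ← Finset.prod_mul_distrib]
    refine Finset.prod_congr rfl fun i hi => ?_
    field_simp [hne i hi]
    ring
  have step2 : ∏ i ∈ Finset.Icc 1 (n-1), (1 + x * (1 - ζ ^ i))
      = x ^ (n-1) * ∑ k ∈ range n, ((1+x)/x) ^ k := by
    have h : ∏ i ∈ Finset.Icc 1 (n-1), (1 + x * (1 - ζ ^ i))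
        = ∏ i ∈ Finset.Icc 1 (n-1), (x * ((1+x)/x - ζ ^ i)) := by
      refine Finset.prod_congr rfl fun i hi => ?_
      field_simp
      ring
    rw [h, Finset.prod_mul_distrib, Finset.prod_const, hcard, hgeom]
  have step3 : x ^ (n-1) * ∑ k ∈ range n, ((1+x)/x) ^ k
      = ∑ k ∈ range n, (1+x) ^ k * x ^ (n-1-k) := by
    rw [Finset.mul_sum]
    refine Finset.sum_congr rfl fun k hk => ?_
    have hk' : k ≤ n - 1 := by simp only [Finset.mem_range] at hk; omega
    rw [div_pow]
    rw [show x ^ (n-1) = x ^ (n-1-k) * x ^ k by rw [← pow_add]; congr 1; omega]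
    field_simp
  have step4 : ∑ k ∈ range n, (1+x) ^ k * x ^ (n-1-k) = (1+x)^n - x^n := by
    have := geom_sum₂_mul (1+x) x n
    simpa using this
  rw [step1, step2, step3, step4]

private lemma qmzv_esymm_val (n : ℕ) (hn : 2 ≤ n) (y : ℕ → ℂ)
    (hkey : C (n:ℂ) * ∏ i ∈ Finset.Icc 1 (n-1), (X + C (y i)) = (1+X)^n - X^n)
    (m : ℕ) (hm : 1 ≤ m) :
    (n:ℂ) * ((Finset.Icc 1 (n-1)).val.map y).esymm m = (n.choose (m+1) : ℂ) := by
  have hcard : (Finset.Icc 1 (n-1)).card = n - 1 := by rw [Nat.card_Icc]; omega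
  rcases le_or_gt m (n-1) with hm2 | hm2
  · have h := congrArg (fun p => Polynomial.coeff p (n-1-m)) hkey
    simp only [coeff_C_mul] at h
    have hk : n-1-m ≤ Multiset.card (Finset.Icc 1 (n-1)).val := by
      rw [Finset.card_def] at hcard; rw [hcard]; omega
    have hL : (∏ i ∈ Finset.Icc 1 (n-1), (X + C (y i))).coeff (n-1-m)
        = ((Finset.Icc 1 (n-1)).val.map y).esymm m := by
      rw [Finset.prod_eq_multiset_prod]
      rw [Multiset.prod_X_add_C_coeff' _ y hk]
      congr 1
      rw [Finset.card_def] at hcard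
      omega
    have hR : ((1+X:ℂ[X])^n - X^n).coeff (n-1-m) = (n.choose (m+1) : ℂ) := by
      rw [Polynomial.coeff_sub, Polynomial.coeff_one_add_X_pow, Polynomial.coeff_X_pow]
      rw [if_neg (by omega)]
      rw [show n.choose (n-1-m) = n.choose (m+1) by
        rw [show n-1-m = n - (m+1) by omega]
        exact Nat.choose_symm (by omega)]
      ring
    rw [hL] at h
    rw [h, hR]
  · have hlt : Multiset.card ((Finset.Icc 1 (n-1)).val.map y) < m := by
      rw [Multiset.card_map]
      rw [Finset.card_def] at hcard
      omega
    rw [Multiset.esymm, Multiset.powersetCard_eq_empty m hlt]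
    simp [Nat.choose_eq_zero_of_lt (by omega : n < m+1)]

private lemma qmzv_newton (n : ℕ) (y : ℕ → ℂ) (k : ℕ) (hk : 0 < k) :
    ∑ i ∈ Finset.Icc 1 (n-1), y i ^ k
      = (-1)^(k+1) * k * ((Finset.Icc 1 (n-1)).val.map y).esymm k
        - ∑ a ∈ (Finset.HasAntidiagonal.antidiagonal k).filter (fun a => a.1 ∈ Set.Ioo 0 k),
            (-1)^a.1 * ((Finset.Icc 1 (n-1)).val.map y).esymm a.1
              * ∑ i ∈ Finset.Icc 1 (n-1), y i ^ a.2 := by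
  classical
  set s := Finset.Icc 1 (n-1) with hs
  have hnewton := MvPolynomial.psum_eq_mul_esymm_sub_sum {x // x ∈ s} ℂ k hk
  have h := congrArg (MvPolynomial.aeval (fun i : {x // x ∈ s} => y i.1)) hnewton
  have hesymm : ∀ m : ℕ, MvPolynomial.aeval (fun i : {x // x ∈ s} => y i.1)
      (MvPolynomial.esymm {x // x ∈ s} ℂ m) = (s.val.map y).esymm m := by
    intro m
    rw [MvPolynomial.aeval_esymm_eq_multiset_esymm]
    congr 1
    rw [Finset.univ_eq_attach, Finset.attach_val]
    rw [show (fun i : {x // x ∈ s} => y i.1) = y ∘ Subtype.val by rfl]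
    rw [← Multiset.map_map, Multiset.attach_map_val]
  have hpsum : ∀ m : ℕ, MvPolynomial.aeval (fun i : {x // x ∈ s} => y i.1)
      (MvPolynomial.psum {x // x ∈ s} ℂ m) = ∑ i ∈ s, y i ^ m := by
    intro m
    rw [MvPolynomial.psum, map_sum]
    simp only [map_pow, MvPolynomial.aeval_X]
    exact Finset.sum_coe_sort s (fun i => y i ^ m)
  rw [hpsum] at h
  rw [map_sub, map_mul, map_mul, map_pow, map_neg, map_one, map_natCast, hesymm, map_sum] at h
  simp only [map_mul, map_pow, map_neg, map_one, hesymm, hpsum] at h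
  exact h

private lemma qmzv_sum_rearrange (n : ℕ) (hn : 2 ≤ n) (y : ℕ → ℂ) :
    ∑ i ∈ Finset.Icc 1 (n-1), ∑ j ∈ Finset.Ioc i (n-1), (y i^2 * y j^3 + y i^3 * y j^2)
    = (∑ i ∈ Finset.Icc 1 (n-1), y i^2) * (∑ i ∈ Finset.Icc 1 (n-1), y i^3)
      - ∑ i ∈ Finset.Icc 1 (n-1), y i^5 := by
  have hmul : (∑ i ∈ Finset.Icc 1 (n-1), y i^2) * (∑ i ∈ Finset.Icc 1 (n-1), y i^3)
      = ∑ i ∈ Finset.Icc 1 (n-1), ∑ j ∈ Finset.Icc 1 (n-1), y i^2 * y j^3 := by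
    rw [Finset.sum_mul_sum]
  have hsplit : ∀ i ∈ Finset.Icc 1 (n-1), ∑ j ∈ Finset.Icc 1 (n-1), y i^2 * y j^3
      = (∑ j ∈ Finset.Ioc i (n-1), y i^2 * y j^3) + y i^5
        + ∑ j ∈ Finset.Ico 1 i, y i^2 * y j^3 := by
    intro i hi
    simp only [Finset.mem_Icc] at hi
    have hu : Finset.Icc 1 i ∪ Finset.Ioc i (n-1) = Finset.Icc 1 (n-1) := by
      ext a
      simp only [Finset.mem_union, Finset.mem_Icc, Finset.mem_Ioc]
      omega
    have hd : Disjoint (Finset.Icc 1 i) (Finset.Ioc i (n-1)) := by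
      rw [Finset.disjoint_left]
      intro a ha ha'
      simp only [Finset.mem_Icc] at ha
      simp only [Finset.mem_Ioc] at ha'
      omega
    rw [← hu, Finset.sum_union hd]
    rw [show Finset.Icc 1 i = insert i (Finset.Ico 1 i) from (Finset.Ico_insert_right hi.1).symm]
    rw [Finset.sum_insert (by simp)]
    ring
  have hcomm : ∑ i ∈ Finset.Icc 1 (n-1), ∑ j ∈ Finset.Ico 1 i, y i^2 * y j^3
      = ∑ j ∈ Finset.Icc 1 (n-1), ∑ i ∈ Finset.Ioc j (n-1), y i^2 * y j^3 := by
    apply Finset.sum_comm'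
    intro i j
    simp only [Finset.mem_Icc, Finset.mem_Ico, Finset.mem_Ioc]
    omega
  rw [hmul, Finset.sum_congr rfl hsplit, Finset.sum_add_distrib, Finset.sum_add_distrib, hcomm]
  have hLHS : ∀ i ∈ Finset.Icc 1 (n-1),
      ∑ j ∈ Finset.Ioc i (n-1), (y i^2 * y j^3 + y i^3 * y j^2)
      = (∑ j ∈ Finset.Ioc i (n-1), y i^2 * y j^3)
        + ∑ j ∈ Finset.Ioc i (n-1), y j^2 * y i^3 := by
    intro i hi
    rw [← Finset.sum_add_distrib]
    exact Finset.sum_congr rfl fun j hj => by ring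
  rw [Finset.sum_congr rfl hLHS, Finset.sum_add_distrib]
  ring

private lemma qmzv_cast_choose (n m : ℕ) :
    ((Nat.factorial m : ℕ) : ℂ) * (n.choose m : ℂ) = ∏ j ∈ range m, ((n:ℂ) - j) := by
  rcases le_or_gt m n with hmn | hmn
  · have h1 := Nat.descFactorial_eq_factorial_mul_choose n m
    have h2 := Nat.descFactorial_eq_prod_range n m
    have : ((n.descFactorial m : ℕ) : ℂ) = ∏ j ∈ range m, ((n:ℂ) - j) := by
      rw [h2, Nat.cast_prod]
      refine Finset.prod_congr rfl fun j hj => ?_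
      have : j ≤ n := by simp only [Finset.mem_range] at hj; omega
      push_cast [Nat.cast_sub this]
      ring
    rw [← this, h1]
    push_cast
    ring
  · rw [Nat.choose_eq_zero_of_lt hmn]
    rw [Finset.prod_eq_zero (Finset.mem_range.mpr hmn) (by ring)]
    push_cast
    ring

theorem qmzv_23_add_32 (n : ℕ) (hn : 2 ≤ n)
    (ζ : ℂ) (hζ : ζ = Complex.exp (2 * Real.pi * Complex.I / n)) :
    ∑ i ∈ Finset.Icc 1 (n - 1), ∑ j ∈ Finset.Ioc i (n - 1),
        (((1 - ζ ^ i) ^ 2)⁻¹ * ((1 - ζ ^ j) ^ 3)⁻¹ +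
          ((1 - ζ ^ i) ^ 3)⁻¹ * ((1 - ζ ^ j) ^ 2)⁻¹) =
      ((n : ℂ) - 1) * ((n : ℂ) - 2) * ((n : ℂ) - 5) * ((n : ℂ) - 7) / 144 := by
  have hn0 : n ≠ 0 := by omega
  have hprim : IsPrimitiveRoot ζ n := by
    rw [hζ]
    exact Complex.isPrimitiveRoot_exp n hn0
  set y : ℕ → ℂ := fun i => (1 - ζ ^ i)⁻¹ with hy
  have hne : ∀ i ∈ Finset.Icc 1 (n-1), 1 - ζ ^ i ≠ 0 := by
    intro i hi
    simp only [Finset.mem_Icc] at hi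
    exact sub_ne_zero.mpr (Ne.symm (hprim.pow_ne_one_of_pos_of_lt (by omega) (by omega)))
  have hgeom : ∀ x : ℂ, ∏ i ∈ Finset.Icc 1 (n-1), (x - ζ ^ i) = ∑ k ∈ range n, x ^ k := by
    intro x
    have := congrArg (Polynomial.eval x) (qmzv_geom_poly n hn ζ hprim)
    simpa [eval_prod] using this
  have hprodn : ∏ i ∈ Finset.Icc 1 (n-1), (1 - ζ ^ i) = (n:ℂ) := by
    have := hgeom 1
    simpa using this
  have hkey := qmzv_key_poly n hn ζ hgeom hne hprodn
  set E : ℕ → ℂ := fun m => ((Finset.Icc 1 (n-1)).val.map y).esymm m with hE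
  set P : ℕ → ℂ := fun k => ∑ i ∈ Finset.Icc 1 (n-1), y i ^ k with hP
  have hEval : ∀ m : ℕ, 1 ≤ m → (n:ℂ) * E m = (n.choose (m+1) : ℂ) :=
    fun m hm => qmzv_esymm_val n hn y hkey m hm
  have hNewton : ∀ k : ℕ, 0 < k → P k = (-1)^(k+1) * k * E k
      - ∑ a ∈ (Finset.HasAntidiagonal.antidiagonal k).filter (fun a => a.1 ∈ Set.Ioo 0 k),
          (-1)^a.1 * E a.1 * P a.2 :=
    fun k hk => qmzv_newton n y k hk
  -- explicit Newton instances
  have hP1 : P 1 = E 1 := by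
    have h := hNewton 1 (by norm_num)
    rw [Finset.sum_filter, Finset.Nat.sum_antidiagonal_eq_sum_range_succ_mk] at h
    simp only [Finset.sum_range_succ, Finset.sum_range_zero, Set.mem_Ioo] at h
    norm_num at h
    try rw [h]
  have hP2 : P 2 = -2 * E 2 + E 1 * P 1 := by
    have h := hNewton 2 (by norm_num)
    rw [Finset.sum_filter, Finset.Nat.sum_antidiagonal_eq_sum_range_succ_mk] at h
    simp only [Finset.sum_range_succ, Finset.sum_range_zero, Set.mem_Ioo] at h
    norm_num at h
    rw [h]; ring
  have hP3 : P 3 = 3 * E 3 + E 1 * P 2 - E 2 * P 1 := by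
    have h := hNewton 3 (by norm_num)
    rw [Finset.sum_filter, Finset.Nat.sum_antidiagonal_eq_sum_range_succ_mk] at h
    simp only [Finset.sum_range_succ, Finset.sum_range_zero, Set.mem_Ioo] at h
    norm_num at h
    rw [h]; ring
  have hP4 : P 4 = -4 * E 4 + E 1 * P 3 - E 2 * P 2 + E 3 * P 1 := by
    have h := hNewton 4 (by norm_num)
    rw [Finset.sum_filter, Finset.Nat.sum_antidiagonal_eq_sum_range_succ_mk] at h
    simp only [Finset.sum_range_succ, Finset.sum_range_zero, Set.mem_Ioo] at h
    norm_num at h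
    rw [h]; ring
  have hP5 : P 5 = 5 * E 5 + E 1 * P 4 - E 2 * P 3 + E 3 * P 2 - E 4 * P 1 := by
    have h := hNewton 5 (by norm_num)
    rw [Finset.sum_filter, Finset.Nat.sum_antidiagonal_eq_sum_range_succ_mk] at h
    simp only [Finset.sum_range_succ, Finset.sum_range_zero, Set.mem_Ioo] at h
    norm_num at h
    rw [h]; ring
  -- explicit E values
  set x : ℂ := (n : ℂ) with hx
  have hx0 : x ≠ 0 := by
    simp only [hx, ne_eq, Nat.cast_eq_zero]
    omega
  have hEexp : ∀ m : ℕ, 1 ≤ m →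
      (((m+1).factorial : ℕ) : ℂ) * (x * E m) = ∏ j ∈ range (m+1), (x - j) := by
    intro m hm
    rw [hEval m hm, qmzv_cast_choose n (m+1)]
  have hE1 : E 1 = (x - 1) / 2 := by
    have h := hEexp 1 (by norm_num)
    simp only [Finset.prod_range_succ, Finset.prod_range_zero] at h
    norm_num [Nat.factorial] at h
    have h2 : 2 * E 1 = x - 1 := mul_left_cancel₀ hx0 (by linear_combination h)
    linear_combination h2 / 2
  have hE2 : E 2 = (x - 1) * (x - 2) / 6 := by
    have h := hEexp 2 (by norm_num)
    simp only [Finset.prod_range_succ, Finset.prod_range_zero] at h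
    norm_num [Nat.factorial] at h
    have h2 : 6 * E 2 = (x - 1) * (x - 2) := mul_left_cancel₀ hx0 (by linear_combination h)
    linear_combination h2 / 6
  have hE3 : E 3 = (x - 1) * (x - 2) * (x - 3) / 24 := by
    have h := hEexp 3 (by norm_num)
    simp only [Finset.prod_range_succ, Finset.prod_range_zero] at h
    norm_num [Nat.factorial] at h
    have h2 : 24 * E 3 = (x - 1) * (x - 2) * (x - 3) :=
      mul_left_cancel₀ hx0 (by linear_combination h)
    linear_combination h2 / 24
  have hE4 : E 4 = (x - 1) * (x - 2) * (x - 3) * (x - 4) / 120 := by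
    have h := hEexp 4 (by norm_num)
    simp only [Finset.prod_range_succ, Finset.prod_range_zero] at h
    norm_num [Nat.factorial] at h
    have h2 : 120 * E 4 = (x - 1) * (x - 2) * (x - 3) * (x - 4) :=
      mul_left_cancel₀ hx0 (by linear_combination h)
    linear_combination h2 / 120
  have hE5 : E 5 = (x - 1) * (x - 2) * (x - 3) * (x - 4) * (x - 5) / 720 := by
    have h := hEexp 5 (by norm_num)
    simp only [Finset.prod_range_succ, Finset.prod_range_zero] at h
    norm_num [Nat.factorial] at h
    have h2 : 720 * E 5 = (x - 1) * (x - 2) * (x - 3) * (x - 4) * (x - 5) :=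
      mul_left_cancel₀ hx0 (by linear_combination h)
    linear_combination h2 / 720
  -- convert the goal
  have hconv : ∀ i ∈ Finset.Icc 1 (n-1), ∑ j ∈ Finset.Ioc i (n - 1),
        (((1 - ζ ^ i) ^ 2)⁻¹ * ((1 - ζ ^ j) ^ 3)⁻¹ +
          ((1 - ζ ^ i) ^ 3)⁻¹ * ((1 - ζ ^ j) ^ 2)⁻¹)
      = ∑ j ∈ Finset.Ioc i (n - 1), (y i ^ 2 * y j ^ 3 + y i ^ 3 * y j ^ 2) := by
    intro i hi
    refine Finset.sum_congr rfl fun j hj => ?_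
    simp only [hy, inv_pow]
  rw [Finset.sum_congr rfl hconv, qmzv_sum_rearrange n hn y]
  show P 2 * P 3 - P 5 = (x - 1) * (x - 2) * (x - 5) * (x - 7) / 144
  rw [hP5, hP4, hP3, hP2, hP1, hE1, hE2, hE3, hE4, hE5]
  field_simp
  ring
end

section
/- Let m ≥ 1, n ≥ 1, and let ζ = exp(2πi/((m+1)n)). Define T_n(m) = Σ_{1≤i₁<i₂<…<i_m≤n} ∏_{r=1}^m 1/(1 - ζ^{(m+1)i_r - r}). Then T_n(m) = (1/(m+1))·C(n, m). -/
open Complex Finset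
open scoped Classical

open Polynomial
open Fin.NatCast Fin.CommRing

lemma lagrange_key {ι : Type*} [DecidableEq ι] (s : Finset ι) (hs : s.Nonempty)
    (y : ι → ℂ) (h0 : ∀ i ∈ s, y i ≠ 0) (hinj : Set.InjOn y s) :
    ∑ i ∈ s, ∏ j ∈ s.erase i, (1 - y j / y i)⁻¹ = 1 := by
  set v : ι → ℂ := fun i => (y i)⁻¹ with hv
  have hvinj : Set.InjOn v s := by
    intro a ha b hb hab
    exact hinj ha hb (by
      have := congrArg (·⁻¹) hab
      simpa [hv, inv_inv] using this)
  have hdeg : (1 : ℂ[X]).degree < (s.card : ℕ) := by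
    rw [Polynomial.degree_one]
    exact_mod_cast Finset.card_pos.mpr hs
  have h := Lagrange.eq_interpolate (f := (1 : ℂ[X])) hvinj hdeg
  have heval := congrArg (Polynomial.eval (0 : ℂ)) h
  simp only [Polynomial.eval_one, Lagrange.interpolate_apply, Polynomial.eval_finset_sum,
    Polynomial.eval_mul, Polynomial.eval_C, Polynomial.eval_one, one_mul,
    Lagrange.basis, Polynomial.eval_prod, Lagrange.basisDivisor,
    Polynomial.eval_mul, Polynomial.eval_C, Polynomial.eval_sub, Polynomial.eval_X,
    zero_sub] at heval
  conv_rhs => rw [heval]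
  refine Finset.sum_congr rfl fun i hi => Finset.prod_congr rfl fun j hj => ?_
  have hj' : j ∈ s := Finset.mem_of_mem_erase hj
  have hji : j ≠ i := Finset.ne_of_mem_erase hj
  have hyi := h0 i hi
  have hyj := h0 j hj'
  have hne : y j ≠ y i := fun h => hji (hinj hj' hi h)
  have hvne : v i - v j ≠ 0 := by
    simp only [hv, sub_ne_zero]
    exact fun h => hne (by simpa [inv_inv] using congrArg (·⁻¹) h.symm)
  have hvij : v i - v j = (y j - y i) / (y i * y j) := by
    simp only [hv]; exact inv_sub_inv hyi hyj
  have h1 : (1 - y j / y i) = (y i - y j) / y i := by field_simp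
  have h2 : y i - y j ≠ 0 := sub_ne_zero.mpr (fun h => hne h.symm)
  have h3 : y j - y i ≠ 0 := sub_ne_zero.mpr hne
  rw [hvij, h1, inv_div, inv_div]
  show y i / (y i - y j) = y i * y j / (y j - y i) * -(y j)⁻¹
  field_simp
  ring

namespace QMZVaux

/-- partial sums of a composition -/
def psum (m : ℕ) (c : Fin (m+1) → ℕ) (k : ℕ) : ℕ :=
  ∑ j ∈ Finset.range k, c (j : Fin (m+1))

/-- exponent partial sums -/
def eps (m : ℕ) (c : Fin (m+1) → ℕ) (k : ℕ) : ℕ :=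
  ∑ j ∈ Finset.range k, ((m+1) * c (j : Fin (m+1)) - 1)

/-- compositions of n+1 into m+1 positive parts -/
def Comps (n m : ℕ) : Finset (Fin (m+1) → ℕ) :=
  (Fintype.piFinset fun _ : Fin (m+1) => Finset.Icc 1 (n+1)).filter
    (fun c => ∑ j, c j = n + 1)

def rot (m s : ℕ) (c : Fin (m+1) → ℕ) : Fin (m+1) → ℕ :=
  fun j => c (j + (s : Fin (m+1)))

def A (n m : ℕ) (i : Fin m → ℕ) (r : ℕ) : ℕ :=
  if h0 : r = 0 then 0 else if h : r ≤ m then i ⟨r - 1, by omega⟩ else n + 1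

def toComp (n m : ℕ) (i : Fin m → ℕ) : Fin (m+1) → ℕ :=
  fun j => A n m i ((j : ℕ) + 1) - A n m i (j : ℕ)

def toTuple (m : ℕ) (c : Fin (m+1) → ℕ) : Fin m → ℕ :=
  fun r => psum m c ((r : ℕ) + 1)

variable {n m : ℕ} {c : Fin (m+1) → ℕ}

lemma psum_succ (k : ℕ) : psum m c (k+1) = psum m c k + c (k : Fin (m+1)) :=
  Finset.sum_range_succ _ k

lemma eps_succ (k : ℕ) : eps m c (k+1) = eps m c k + ((m+1) * c (k : Fin (m+1)) - 1) :=
  Finset.sum_range_succ _ k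

lemma mem_comps : c ∈ Comps n m ↔ (∀ j, 1 ≤ c j ∧ c j ≤ n + 1) ∧ ∑ j, c j = n + 1 := by
  simp [Comps, Fintype.mem_piFinset, Finset.mem_Icc]

section comps
variable (hc : c ∈ Comps n m)
include hc

lemma comps_one (j : Fin (m+1)) : 1 ≤ c j := ((mem_comps.1 hc).1 j).1

lemma comps_sum : ∑ j, c j = n + 1 := (mem_comps.1 hc).2

lemma psum_le_ge (k : ℕ) : k ≤ psum m c k := by
  induction k with
  | zero => simp [psum]
  | succ k ih =>
    have := comps_one hc (k : Fin (m+1))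
    rw [psum_succ]; omega

lemma eps_eq (k : ℕ) : eps m c k = (m+1) * psum m c k - k := by
  induction k with
  | zero => simp [eps, psum]
  | succ k ih =>
    have h1 := comps_one hc (k : Fin (m+1))
    have h2 := psum_le_ge hc k
    rw [eps_succ, psum_succ, ih]
    have : (m+1) * (psum m c k + c (k : Fin (m+1))) = (m+1) * psum m c k + (m+1) * c (k : Fin (m+1)) := by ring
    rw [this]
    have h3 : 1 ≤ (m+1) * c (k : Fin (m+1)) := by nlinarith
    have h4 : k ≤ (m+1) * psum m c k := by nlinarith
    omega

lemma psum_full : psum m c (m+1) = n + 1 := by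
  rw [psum, ← comps_sum hc]
  rw [← Fin.sum_univ_eq_sum_range (fun j => c (j : Fin (m+1))) (m+1)]
  exact Finset.sum_congr rfl fun j _ => by rw [Fin.cast_val_eq_self]

lemma eps_full : eps m c (m+1) = (m+1) * n := by
  rw [eps_eq hc, psum_full hc]; ring_nf; omega

lemma psum_lt (k l : ℕ) (hkl : k < l) : psum m c k < psum m c l := by
  have h1 := comps_one hc (k : Fin (m+1))
  have h2 : psum m c (k+1) ≤ psum m c l :=
    Finset.sum_le_sum_of_subset (Finset.range_subset_range.2 hkl)
  rw [psum_succ] at h2; omega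

lemma eps_lt (hm : 1 ≤ m) (k l : ℕ) (hkl : k < l) : eps m c k < eps m c l := by
  have h1 := comps_one hc (k : Fin (m+1))
  have h2 : eps m c (k+1) ≤ eps m c l :=
    Finset.sum_le_sum_of_subset (Finset.range_subset_range.2 hkl)
  have h3 : m + 1 ≤ (m+1) * c (k : Fin (m+1)) := Nat.le_mul_of_pos_right _ h1
  rw [eps_succ] at h2; omega

lemma eps_period (k : ℕ) : eps m c (k + (m+1)) = eps m c k + (m+1) * n := by
  induction k with
  | zero =>
    simp only [Nat.zero_add]
    rw [eps_full hc]
    simp [eps]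
  | succ k ih =>
    have hcast : (((k + (m+1) : ℕ)) : Fin (m+1)) = (k : Fin (m+1)) := by
      rw [Nat.cast_add, Fin.natCast_self, add_zero]
    have : k + 1 + (m+1) = (k + (m+1)) + 1 := by omega
    rw [this, eps_succ, hcast, ih, eps_succ]
    omega

end comps

lemma eps_shift (s k : ℕ) : eps m c (s + k) = eps m c s + eps m (rot m s c) k := by
  induction k with
  | zero => simp [eps]
  | succ k ih =>
    have : s + (k + 1) = (s + k) + 1 := by omega
    rw [this, eps_succ, eps_succ, ih]
    have hcast : ((s + k : ℕ) : Fin (m+1)) = (k : Fin (m+1)) + (s : Fin (m+1)) := by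
      push_cast; ring
    rw [rot, hcast]
    omega

end QMZVaux

namespace QMZVaux

variable {n m : ℕ} {c : Fin (m+1) → ℕ}

def irot (m s : ℕ) (c : Fin (m+1) → ℕ) : Fin (m+1) → ℕ :=
  fun j => c (j - (s : Fin (m+1)))

lemma rot_mem (hc : c ∈ Comps n m) (s : ℕ) : rot m s c ∈ Comps n m := by
  rw [mem_comps] at hc ⊢
  refine ⟨fun j => hc.1 _, ?_⟩
  rw [← hc.2]
  exact Equiv.sum_comp (Equiv.addRight ((s : ℕ) : Fin (m+1))) c

lemma irot_mem (hc : c ∈ Comps n m) (s : ℕ) : irot m s c ∈ Comps n m := by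
  rw [mem_comps] at hc ⊢
  refine ⟨fun j => hc.1 _, ?_⟩
  rw [← hc.2]
  exact Equiv.sum_comp (Equiv.subRight ((s : ℕ) : Fin (m+1))) c

lemma irot_rot (s : ℕ) : irot m s (rot m s c) = c := by
  funext j; simp [irot, rot]

lemma rot_irot (s : ℕ) : rot m s (irot m s c) = c := by
  funext j; simp [irot, rot]

lemma pow_eps_aux {ζ : ℂ} (hz : ζ ^ ((m+1) * n) = 1) (hc : c ∈ Comps n m) (r q : ℕ) :
    ζ ^ eps m c (r + q * (m+1)) = ζ ^ eps m c r := by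
  induction q with
  | zero => simp
  | succ q ih =>
    have : r + (q+1) * (m+1) = (r + q * (m+1)) + (m+1) := by ring
    rw [this, eps_period hc, pow_add, hz, mul_one, ih]

lemma pow_eps_mod {ζ : ℂ} (hz : ζ ^ ((m+1) * n) = 1) (hc : c ∈ Comps n m) (a : ℕ) :
    ζ ^ eps m c a = ζ ^ eps m c (a % (m+1)) := by
  conv_lhs => rw [← Nat.mod_add_div' a (m+1)]
  exact pow_eps_aux hz hc _ _

lemma mod_char (x : ℕ) (hx : x < 2 * (m+1)) :
    x % (m+1) = if x < m+1 then x else x - (m+1) := by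
  split_ifs with h
  · exact Nat.mod_eq_of_lt h
  · rw [Nat.mod_eq_sub_mod (le_of_not_gt h), Nat.mod_eq_of_lt (by omega)]

end QMZVaux

namespace QMZVaux
variable {n m : ℕ} {c : Fin (m+1) → ℕ}

lemma cyclic_sum {ζ : ℂ} (hm : 1 ≤ m) (hn : 1 ≤ n)
    (hprim : IsPrimitiveRoot ζ ((m+1)*n)) (hc : c ∈ Comps n m) :
    ∑ s ∈ Finset.range (m+1), ∏ r : Fin m, (1 - ζ ^ eps m (rot m s c) ((r:ℕ)+1))⁻¹ = 1 := by
  have hN : (m+1)*n ≠ 0 := by positivity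
  have hz : ζ ^ ((m+1)*n) = 1 := hprim.pow_eq_one
  have hζ0 : ζ ≠ 0 := hprim.ne_zero hN
  set y : Fin (m+1) → ℂ := fun k => ζ ^ eps m c (k : ℕ) with hy
  have hepslt : ∀ k : Fin (m+1), eps m c (k : ℕ) < (m+1)*n := by
    intro k
    calc eps m c (k:ℕ) < eps m c (m+1) := eps_lt hc hm _ _ (by omega)
    _ = (m+1)*n := eps_full hc
  have hinj : Set.InjOn y (↑(univ : Finset (Fin (m+1)))) := by
    intro k _ l _ h
    have e := hprim.pow_inj (hepslt k) (hepslt l) h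
    by_contra hkl
    rcases lt_trichotomy (k : ℕ) (l : ℕ) with h' | h' | h'
    · exact absurd e (Nat.ne_of_lt (eps_lt hc hm _ _ h'))
    · exact hkl (Fin.ext h')
    · exact absurd e.symm (Nat.ne_of_lt (eps_lt hc hm _ _ h'))
  have h0 : ∀ k ∈ (univ : Finset (Fin (m+1))), y k ≠ 0 := fun k _ => pow_ne_zero _ hζ0
  have key := lagrange_key univ univ_nonempty y h0 hinj
  rw [← Fin.sum_univ_eq_sum_range
    (fun s => ∏ r : Fin m, (1 - ζ ^ eps m (rot m s c) ((r:ℕ)+1))⁻¹) (m+1)]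
  conv_rhs => rw [← key]
  refine Finset.sum_congr rfl fun k _ => ?_
  have hval : ∀ x : ℕ, ((x : Fin (m+1)) : ℕ) = x % (m+1) := fun x => Fin.val_natCast x (m+1)
  refine Finset.prod_bij (fun r _ => (((k:ℕ) + (r:ℕ) + 1 : ℕ) : Fin (m+1))) ?_ ?_ ?_ ?_
  · intro r _
    rw [Finset.mem_erase]
    refine ⟨?_, Finset.mem_univ _⟩
    intro hcontra
    have := congrArg Fin.val hcontra
    rw [hval, mod_char _ (by omega)] at this
    have hk := k.isLt; have hr := r.isLt
    split_ifs at this <;> omega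
  · intro r1 _ r2 _ hr
    have := congrArg Fin.val hr
    rw [hval, hval, mod_char _ (by omega), mod_char _ (by omega)] at this
    have hk := k.isLt; have h1 := r1.isLt; have h2 := r2.isLt
    apply Fin.ext
    split_ifs at this <;> omega
  · intro j hj
    rw [Finset.mem_erase] at hj
    have hjk : (j : ℕ) ≠ (k : ℕ) := fun h => hj.1 (Fin.ext h)
    have hk := k.isLt; have hjlt := j.isLt
    rcases Nat.lt_or_ge (k : ℕ) (j : ℕ) with h' | h'
    · refine ⟨⟨(j : ℕ) - (k : ℕ) - 1, by omega⟩, Finset.mem_univ _, ?_⟩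
      apply Fin.ext
      rw [hval, mod_char _ (by omega)]
      simp only
      split_ifs <;> omega
    · refine ⟨⟨(j : ℕ) + m - (k : ℕ), by omega⟩, Finset.mem_univ _, ?_⟩
      apply Fin.ext
      rw [hval, mod_char _ (by omega)]
      simp only
      split_ifs <;> omega
  · intro r _
    congr 1
    have hshift := eps_shift (c := c) (k : ℕ) ((r : ℕ) + 1)
    have hmod := pow_eps_mod (c := c) hz hc ((k : ℕ) + (r : ℕ) + 1)
    have hyj : y (((k:ℕ) + (r:ℕ) + 1 : ℕ) : Fin (m+1)) = ζ ^ eps m c ((k:ℕ) + (r:ℕ) + 1) := by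
      rw [hy]
      simp only [hval]
      rw [← pow_eps_mod hz hc]
    rw [hyj, hy]
    simp only
    rw [show (k:ℕ) + (r:ℕ) + 1 = (k:ℕ) + ((r:ℕ) + 1) by omega, hshift, pow_add]
    rw [mul_div_cancel_left₀ _ (pow_ne_zero _ hζ0)]

end QMZVaux

namespace QMZVaux
variable {n m : ℕ} {c : Fin (m+1) → ℕ} {i : Fin m → ℕ}

lemma A_zero : A n m i 0 = 0 := by simp [A]

lemma A_top : A n m i (m+1) = n + 1 := by
  unfold A; rw [dif_neg (by omega), dif_neg (by omega)]

lemma A_mid (hm : 1 ≤ m) {r : ℕ} (h0 : r ≠ 0) (h1 : r ≤ m) :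
    A n m i r = i ⟨r - 1, by omega⟩ := by
  unfold A; rw [dif_neg h0, dif_pos h1]

lemma A_le (hmem : ∀ r, 1 ≤ i r ∧ i r ≤ n) (r : ℕ) : A n m i r ≤ n + 1 := by
  unfold A
  split_ifs with h0 h1
  · omega
  · exact le_trans (hmem _).2 (by omega)
  · exact le_refl _

lemma A_strict (hm : 1 ≤ m) (hmono : StrictMono i) (hmem : ∀ r, 1 ≤ i r ∧ i r ≤ n)
    {r : ℕ} (hr : r ≤ m) : A n m i r < A n m i (r + 1) := by
  rcases Nat.eq_or_lt_of_le hr with h | h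
  · rw [h, A_top, A_mid hm (by omega) (le_refl m)]
    exact Nat.lt_succ_of_le (hmem _).2
  · rcases Nat.eq_zero_or_pos r with h0 | h0
    · subst h0
      rw [A_zero, A_mid hm (by omega) (by omega)]
      exact (hmem _).1
    · rw [A_mid hm (by omega) (by omega), A_mid hm (by omega) (by omega)]
      exact hmono (Fin.mk_lt_mk.mpr (by omega))

lemma A_mono (hm : 1 ≤ m) (hmono : StrictMono i) (hmem : ∀ r, 1 ≤ i r ∧ i r ≤ n) :
    Monotone (A n m i) := by
  apply monotone_nat_of_le_succ
  intro r
  rcases le_or_gt r m with h | h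
  · exact le_of_lt (A_strict hm hmono hmem h)
  · have h1 : A n m i r = n+1 := by unfold A; rw [dif_neg (by omega), dif_neg (by omega)]
    have h2 : A n m i (r+1) = n+1 := by unfold A; rw [dif_neg (by omega), dif_neg (by omega)]
    omega

lemma toComp_mem (hm : 1 ≤ m) (hmono : StrictMono i) (hmem : ∀ r, 1 ≤ i r ∧ i r ≤ n) :
    toComp n m i ∈ Comps n m := by
  rw [mem_comps]
  constructor
  · intro j
    have hj : (j : ℕ) ≤ m := by omega
    have h1 := A_strict hm hmono hmem hj
    have h2 := A_le hmem ((j : ℕ) + 1)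
    unfold toComp
    omega
  · have heq : ∑ j : Fin (m+1), toComp n m i j
        = ∑ j ∈ Finset.range (m+1), (A n m i (j+1) - A n m i j) :=
      Fin.sum_univ_eq_sum_range (fun t => A n m i (t+1) - A n m i t) (m+1)
    rw [heq, Finset.sum_range_tsub (A_mono hm hmono hmem) (m+1), A_zero, A_top]
    omega

lemma toTuple_toComp (hm : 1 ≤ m) (hmono : StrictMono i) (hmem : ∀ r, 1 ≤ i r ∧ i r ≤ n) :
    toTuple m (toComp n m i) = i := by
  funext r
  unfold toTuple psum
  have heq : ∑ j ∈ Finset.range ((r:ℕ)+1), toComp n m i (j : Fin (m+1))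
      = ∑ j ∈ Finset.range ((r:ℕ)+1), (A n m i (j+1) - A n m i j) := by
    refine Finset.sum_congr rfl fun j hj => ?_
    rw [Finset.mem_range] at hj
    have hjm : j < m + 1 := by omega
    unfold toComp
    rw [Fin.val_natCast, Nat.mod_eq_of_lt hjm]
  rw [heq, Finset.sum_range_tsub (A_mono hm hmono hmem) _, A_zero, Nat.sub_zero]
  rw [A_mid hm (by omega) (by exact r.isLt)]
  exact congrArg i (Fin.ext (by simp))

lemma toTuple_mono (hc : c ∈ Comps n m) : StrictMono (toTuple m c) := by
  intro a b hab
  exact psum_lt hc _ _ (by exact Nat.add_lt_add_right hab 1)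

lemma toTuple_mem (hc : c ∈ Comps n m) (r : Fin m) :
    1 ≤ toTuple m c r ∧ toTuple m c r ≤ n := by
  unfold toTuple
  constructor
  · have := psum_le_ge hc ((r:ℕ)+1); omega
  · have h1 : psum m c ((r:ℕ)+1) < psum m c (m+1) := psum_lt hc _ _ (by omega)
    rw [psum_full hc] at h1; omega

lemma A_toTuple (hm : 1 ≤ m) (hc : c ∈ Comps n m) {r : ℕ} (hr : r ≤ m + 1) :
    A n m (toTuple m c) r = psum m c r := by
  rcases Nat.eq_zero_or_pos r with h0 | h0
  · subst h0; rw [A_zero]; simp [psum]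
  · rcases Nat.eq_or_lt_of_le hr with h | h
    · subst h; rw [A_top, psum_full hc]
    · rw [A_mid hm (by omega) (by omega)]
      show psum m c ((r - 1) + 1) = psum m c r
      congr 1
      omega

lemma toComp_toTuple (hm : 1 ≤ m) (hc : c ∈ Comps n m) :
    toComp n m (toTuple m c) = c := by
  funext j
  unfold toComp
  rw [A_toTuple hm hc (by omega), A_toTuple hm hc (by omega), psum_succ]
  rw [Fin.cast_val_eq_self]
  omega

end QMZVaux

namespace QMZVaux

lemma card_T (n m : ℕ) :
    ((Fintype.piFinset fun _ : Fin m => Finset.Icc 1 n).filter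
      (fun i => StrictMono i)).card = n.choose m := by
  have h1 : ((Finset.Icc 1 n).powersetCard m).card = n.choose m := by
    rw [Finset.card_powersetCard, Nat.card_Icc]
    norm_num
  rw [← h1]
  apply Finset.card_bij (fun i (_ : i ∈ _) => Finset.image i Finset.univ)
  · intro i hi
    rw [Finset.mem_filter, Fintype.mem_piFinset] at hi
    rw [Finset.mem_powersetCard]
    refine ⟨fun x hx => ?_, ?_⟩
    · rcases Finset.mem_image.1 hx with ⟨r, _, rfl⟩; exact hi.1 r
    · rw [Finset.card_image_of_injective _ hi.2.injective, Finset.card_univ, Fintype.card_fin]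
  · intro i1 h1' i2 h2' he
    rw [Finset.mem_filter] at h1' h2'
    have hr : Set.range i1 = Set.range i2 := by
      rw [← Set.image_univ, ← Set.image_univ, ← Finset.coe_univ, ← Finset.coe_image,
        ← Finset.coe_image, he]
    haveI hwf : WellFoundedLT (Fin m) := inferInstance
    exact (@StrictMono.range_inj (Fin m) ℕ _ _ hwf i1 i2 h1'.2 h2'.2).1 hr
  · intro t ht
    rw [Finset.mem_powersetCard] at ht
    refine ⟨t.orderEmbOfFin ht.2, ?_, ?_⟩
    · rw [Finset.mem_filter, Fintype.mem_piFinset]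
      exact ⟨fun r => ht.1 (t.orderEmbOfFin_mem ht.2 r), (t.orderEmbOfFin ht.2).strictMono⟩
    · apply Finset.coe_injective
      rw [Finset.coe_image, Finset.coe_univ, Set.image_univ, Finset.range_orderEmbOfFin]

end QMZVaux

open QMZVaux

theorem qmzv_shifted_indices (n m : ℕ) (hn : 1 ≤ n) (hm : 1 ≤ m)
    (ζ : ℂ) (hζ : ζ = Complex.exp (2 * Real.pi * Complex.I / ((m + 1) * n))) :
    ∑ i ∈ (Fintype.piFinset fun _ : Fin m => Finset.Icc 1 n).filter
        (fun i => StrictMono i),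
      ∏ r : Fin m, (1 / (1 - ζ ^ ((m + 1) * i r - ((r : ℕ) + 1)))) =
      (1 / ((m : ℂ) + 1)) * (Nat.choose n m : ℂ) := by
  have hmn : (m + 1) * n ≠ 0 := by positivity
  have hprim : IsPrimitiveRoot ζ ((m + 1) * n) := by
    rw [hζ]
    have h := Complex.isPrimitiveRoot_exp ((m + 1) * n) hmn
    have hcast : (((m + 1) * n : ℕ) : ℂ) = ((m : ℂ) + 1) * (n : ℂ) := by push_cast; ring
    rwa [hcast] at h
  set T := (Fintype.piFinset fun _ : Fin m => Finset.Icc 1 n).filter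
    (fun i => StrictMono i) with hT
  set F : (Fin (m+1) → ℕ) → ℂ := fun c => ∏ r : Fin m, (1 - ζ ^ eps m c ((r:ℕ)+1))⁻¹ with hF
  have mem_T : ∀ i : Fin m → ℕ, i ∈ T ↔ ((∀ r, 1 ≤ i r ∧ i r ≤ n) ∧ StrictMono i) := by
    intro i
    simp [hT, Fintype.mem_piFinset, Finset.mem_filter, Finset.mem_Icc]
  -- Step A : reindex over compositions
  have stepA : ∑ i ∈ T, ∏ r : Fin m, (1 / (1 - ζ ^ ((m + 1) * i r - ((r : ℕ) + 1))))
      = ∑ c ∈ Comps n m, F c := by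
    refine Finset.sum_nbij' (toComp n m) (toTuple m) ?_ ?_ ?_ ?_ ?_
    · intro i hi
      rw [mem_T] at hi
      exact toComp_mem hm hi.2 hi.1
    · intro c hc
      rw [mem_T]
      exact ⟨toTuple_mem hc, toTuple_mono hc⟩
    · intro i hi
      rw [mem_T] at hi
      exact toTuple_toComp hm hi.2 hi.1
    · intro c hc
      exact toComp_toTuple hm hc
    · intro i hi
      rw [mem_T] at hi
      refine Finset.prod_congr rfl fun r _ => ?_
      rw [one_div]
      congr 2
      have hcm := toComp_mem hm hi.2 hi.1
      rw [eps_eq hcm]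
      have : psum m (toComp n m i) ((r:ℕ)+1) = i r := congrFun (toTuple_toComp hm hi.2 hi.1) r
      rw [this]
  -- Step B : rotation invariance
  have stepB : ∀ s ∈ Finset.range (m+1),
      ∑ c ∈ Comps n m, F c = ∑ c ∈ Comps n m, F (rot m s c) := by
    intro s _
    refine Finset.sum_nbij' (irot m s) (rot m s) ?_ ?_ ?_ ?_ ?_
    · intro c hc; exact irot_mem hc s
    · intro c hc; exact rot_mem hc s
    · intro c _; exact rot_irot s
    · intro c _; exact irot_rot s
    · intro c _; rw [rot_irot s]
  -- Step C : cyclic sum is 1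
  have stepC : ∀ c ∈ Comps n m,
      ∑ s ∈ Finset.range (m+1), F (rot m s c) = 1 := fun c hc =>
    cyclic_sum hm hn hprim hc
  -- card
  have hcardTC : (Comps n m).card = T.card := by
    refine Finset.card_nbij' (toTuple m) (toComp n m) ?_ ?_ ?_ ?_
    · intro c hc; rw [Finset.mem_coe, mem_T]; exact ⟨toTuple_mem hc, toTuple_mono hc⟩
    · intro i hi; rw [Finset.mem_coe, mem_T] at hi; exact toComp_mem hm hi.2 hi.1
    · intro c hc; exact toComp_toTuple hm hc
    · intro i hi; rw [Finset.mem_coe, mem_T] at hi; exact toTuple_toComp hm hi.2 hi.1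
  have hcard : ((Comps n m).card : ℂ) = (n.choose m : ℂ) := by
    rw [hcardTC, hT, card_T]
  -- assemble
  have hdouble : ∑ s ∈ Finset.range (m+1), ∑ c ∈ Comps n m, F (rot m s c)
      = ((Comps n m).card : ℂ) := by
    rw [Finset.sum_comm, Finset.sum_congr rfl stepC]
    simp
  have hconst : ∑ s ∈ Finset.range (m+1), ∑ c ∈ Comps n m, F (rot m s c)
      = ((m : ℂ) + 1) * ∑ c ∈ Comps n m, F c := by
    rw [Finset.sum_congr rfl (fun s hs => (stepB s hs).symm), Finset.sum_const,
      Finset.card_range, nsmul_eq_mul]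
    push_cast
    ring
  rw [stepA]
  have hm1 : ((m : ℂ) + 1) ≠ 0 := by
    have h : (((m + 1 : ℕ)) : ℂ) ≠ 0 := Nat.cast_ne_zero.mpr (by omega)
    push_cast at h
    exact h
  have h2 := hdouble.symm.trans hconst
  rw [hcard] at h2
  rw [h2, one_div, inv_mul_cancel_left₀ hm1]
end
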